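/- arXiv:1603.07229 — 3 statements merged into one kernel-verified Lean document; each statement's English description precedes it below -/
import Mathlib

section
/- Structure of utility-constrained surplus maximization (Lemma A.1): Let f be a density on [l, h̄] with l ≥ 0, and for c ≥ 0 let g(c) be the value of the utility-constrained surplus problem. Then: (i) if c ≥ E[v], then g(c) = E[v], attained by allocating the item to all types (x ≡ 1) with a constant payment making the expected utility at most c; (ii) if 0 ≤ c < E[v], the optimum is attained by a randomization over at most two posted prices p_1 ≤ p_2, i.e., an allocation with x(v) = 0 for v < p_1, x(v) = α ∈ [0,1] for p_1 ≤ v < p_2, and x(v) = 1 for v ≥ p_2, whose expected utility is exactly c; moreover, if the function S_U (the surplus of the posted price giving expected utility c) is concave, the optimum is a single posted price; (iii) in either case there is an optimal solution attaining the utility bound with equality; and (iv) g is a concave function of c. -/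
/-!
Lemma A.1 (structure of utility-constrained surplus maximization): let `g(c)`
be the optimal expected surplus over IC, IR single-period mechanisms whose
expected utility is at most `c ≥ 0`.  Then:
(i) if `c ≥ E[v]`, then `g(c) = E[v]`, attained by allocating to all types at
    zero payment;
(ii) if `0 ≤ c < E[v]`, the optimum is attained by a randomization over at most
    two posted prices `p₁ ≤ p₂` whose expected utility is exactly `c`, and if
    the surplus-at-utility function `S_U` is concave, by a single posted price;
(iii) in either case some optimal solution attains the utility bound with
    equality;
(iv) `g` is concave on `[0, ∞)`.
-/

open MeasureTheory

namespace Stmt13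

/-- Feasibility for the utility-constrained surplus problem: allocation
probabilities, incentive compatibility and individual rationality on the
support, and expected utility at most `c`. -/
def Feas (μ : Measure ℝ) (l hb c : ℝ) (x p : ℝ → ℝ) : Prop :=
  (∀ v, x v ∈ Set.Icc (0 : ℝ) 1) ∧
  (∀ v ∈ Set.Icc l hb, ∀ v' ∈ Set.Icc l hb, v * x v' - p v' ≤ v * x v - p v) ∧
  (∀ v ∈ Set.Icc l hb, 0 ≤ v * x v - p v) ∧
  (∫ v, (v * x v - p v) ∂μ) ≤ c

/-- The utility-constrained surplus function `g(c)`. -/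
noncomputable def gVal (μ : Measure ℝ) (l hb : ℝ) (c : ℝ) : ℝ :=
  sSup {s : ℝ | ∃ x p : ℝ → ℝ, Feas μ l hb c x p ∧ s = ∫ v, v * x v ∂μ}

/-- Allocation of a randomization over the two posted prices `p₁ ≤ p₂`, buying
at `p₁` with probability `α` and at `p₂` with probability `1 - α`. -/
noncomputable def stepX (p₁ p₂ α : ℝ) : ℝ → ℝ :=
  fun v => if v < p₁ then 0 else if v < p₂ then α else 1

/-- Payment rule of the randomization over the two posted prices `p₁ ≤ p₂`. -/
noncomputable def stepP (p₁ p₂ α : ℝ) : ℝ → ℝ :=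
  fun v => if v < p₁ then 0 else if v < p₂ then α * p₁ else α * p₁ + (1 - α) * p₂

/-- Expected utility of posting the price `r`. -/
noncomputable def uPrice (μ : Measure ℝ) (r : ℝ) : ℝ :=
  ∫ v, max (v - r) 0 ∂μ

/-- Expected surplus of posting the price `r`. -/
noncomputable def sPrice (μ : Measure ℝ) (r : ℝ) : ℝ :=
  ∫ v, (if r ≤ v then v else 0) ∂μ

end Stmt13

open Stmt13

namespace A1

variable {μ : Measure ℝ} {l hb : ℝ}

lemma integrable_of_bdd [IsFiniteMeasure μ] {g : ℝ → ℝ} (hg : AEStronglyMeasurable g μ)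
    (C : ℝ) (hC : ∀ᵐ v ∂μ, |g v| ≤ C) : Integrable g μ :=
  Integrable.mono' (integrable_const C) hg (by simpa [Real.norm_eq_abs] using hC)

variable (hae : ∀ᵐ v ∂μ, v ∈ Set.Icc l hb) (hl : 0 ≤ l) [IsProbabilityMeasure μ]

include hae hl in
lemma ae_abs_le : ∀ᵐ v ∂μ, |v| ≤ |hb| := by
  filter_upwards [hae] with v hv
  rw [abs_of_nonneg (hl.trans hv.1)]
  exact hv.2.trans (le_abs_self hb)

include hae hl in
lemma integrable_id' : Integrable (fun v : ℝ => v) μ :=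
  integrable_of_bdd measurable_id.aestronglyMeasurable |hb| (ae_abs_le hae hl)

include hae hl in
lemma integrable_maxsub (r : ℝ) : Integrable (fun v => max (v - r) 0) μ := by
  refine integrable_of_bdd ((measurable_id.sub_const r).max measurable_const).aestronglyMeasurable
    (|hb| + |r|) ?_
  filter_upwards [ae_abs_le hae hl] with v hv
  rw [abs_of_nonneg (le_max_right _ _)]
  rcases le_or_gt (v - r) 0 with h | h
  · rw [max_eq_right h]; positivity
  · rw [max_eq_left h.le]
    calc v - r ≤ |v| + |r| := by
          have := abs_le.mp (le_refl |v|)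
          have h1 : v ≤ |v| := le_abs_self v
          have h2 : -r ≤ |r| := neg_le_abs r
          linarith
    _ ≤ |hb| + |r| := by linarith

include hae hl in
lemma integrable_ifge (r : ℝ) : Integrable (fun v => if r ≤ v then v else 0) μ := by
  refine integrable_of_bdd ?_ |hb| ?_
  · exact (Measurable.ite measurableSet_Ici measurable_id measurable_const).aestronglyMeasurable
  · filter_upwards [ae_abs_le hae hl] with v hv
    split_ifs
    · exact hv
    · simp

lemma uPrice_nonneg (r : ℝ) : 0 ≤ uPrice μ r :=
  integral_nonneg fun v => le_max_right _ _

lemma uPrice_anti {a b : ℝ} (hab : a ≤ b) (hI : Integrable (fun v => max (v - a) 0) μ)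
    (hI' : Integrable (fun v => max (v - b) 0) μ) : uPrice μ b ≤ uPrice μ a := by
  refine integral_mono hI' hI fun v => ?_
  exact max_le_max (by linarith) le_rfl

include hae hl in
lemma uPrice_zero : uPrice μ 0 = ∫ v, v ∂μ := by
  refine integral_congr_ae ?_
  filter_upwards [hae] with v hv
  have h0 : (0:ℝ) ≤ v - 0 := by linarith [hl.trans hv.1]
  simpa using max_eq_left h0

include hae in
lemma uPrice_hb : uPrice μ hb = 0 := by
  have : (fun v => max (v - hb) 0) =ᵐ[μ] fun _ => (0:ℝ) := by
    filter_upwards [hae] with v hv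
    exact max_eq_right (by linarith [hv.2])
  rw [uPrice, integral_congr_ae this, integral_zero]

include hae hl in
lemma uPrice_le_E {r : ℝ} (hr : 0 ≤ r) : uPrice μ r ≤ ∫ v, v ∂μ := by
  rw [← uPrice_zero hae hl]
  exact uPrice_anti hr (integrable_maxsub hae hl 0) (integrable_maxsub hae hl r)

include hae hl in
lemma uPrice_lipschitz : LipschitzWith 1 (uPrice μ) := by
  refine LipschitzWith.of_dist_le_mul fun a b => ?_
  rw [Real.dist_eq, Real.dist_eq, NNReal.coe_one, one_mul]
  rw [uPrice, uPrice, ← integral_sub (integrable_maxsub hae hl a) (integrable_maxsub hae hl b)]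
  calc |∫ v, (max (v - a) 0 - max (v - b) 0) ∂μ| ≤ ∫ v, |max (v - a) 0 - max (v - b) 0| ∂μ := by
        simpa [Real.norm_eq_abs] using
          norm_integral_le_integral_norm (fun v => max (v - a) 0 - max (v - b) 0) (μ := μ)
    _ ≤ ∫ _, |a - b| ∂μ := by
        refine integral_mono ((integrable_maxsub hae hl a).sub
          (integrable_maxsub hae hl b)).abs (integrable_const _) fun v => ?_
        calc |max (v - a) 0 - max (v - b) 0| ≤ |(v - a) - (v - b)| :=
              abs_max_sub_max_le_abs _ _ _
          _ = |a - b| := by rw [show (v - a) - (v - b) = -(a - b) by ring, abs_neg]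
    _ = |a - b| := by simp

include hae hl in
lemma uPrice_cont : Continuous (uPrice μ) := (uPrice_lipschitz hae hl).continuous

end A1

namespace B1
variable {μ : Measure ℝ} {l hb : ℝ}
variable (hae : ∀ᵐ v ∂μ, v ∈ Set.Icc l hb) (hl : 0 ≤ l) (hatom : ∀ a : ℝ, μ {a} = 0)
  [IsProbabilityMeasure μ]

include hatom in
lemma ae_ne (a : ℝ) : ∀ᵐ v ∂μ, v ≠ a := by
  rw [MeasureTheory.ae_iff]
  simpa using hatom a

include hae hl in
lemma sPrice_nonneg (r : ℝ) : 0 ≤ sPrice μ r := by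
  refine integral_nonneg_of_ae ?_
  filter_upwards [hae] with v hv
  simp only [Pi.zero_apply]
  split_ifs
  · linarith [hl.trans hv.1]
  · exact le_refl 0

include hae hl in
lemma sPrice_le_E (r : ℝ) : sPrice μ r ≤ ∫ v, v ∂μ := by
  refine integral_mono_ae (A1.integrable_ifge hae hl r) (A1.integrable_id' hae hl) ?_
  filter_upwards [hae] with v hv
  split_ifs
  · exact le_rfl
  · linarith [hl.trans hv.1]

include hae hatom in
lemma sPrice_of_ae_le {r : ℝ} (h : ∀ᵐ v ∂μ, v ≤ r) : sPrice μ r = 0 := by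
  have : (fun v => if r ≤ v then v else 0) =ᵐ[μ] fun _ => (0:ℝ) := by
    filter_upwards [h, ae_ne hatom r] with v hv hne
    split_ifs with h'
    · exact absurd (le_antisymm hv h') hne
    · rfl
  rw [sPrice, integral_congr_ae this, integral_zero]

include hae hl in
lemma ae_le_of_uPrice_zero {r : ℝ} (h : uPrice μ r = 0) : ∀ᵐ v ∂μ, v ≤ r := by
  have h0 : (fun v => max (v - r) 0) =ᵐ[μ] fun _ => (0:ℝ) := by
    have := (integral_eq_zero_iff_of_nonneg (fun v => le_max_right _ _)
      (A1.integrable_maxsub hae hl r)).mp h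
    exact this
  filter_upwards [h0] with v hv
  by_contra hc
  push_neg at hc
  have : max (v - r) 0 = v - r := max_eq_left (by linarith)
  rw [this] at hv
  linarith

include hae hl hatom in
lemma sPrice_zero_of_uPrice_zero {r : ℝ} (h : uPrice μ r = 0) : sPrice μ r = 0 :=
  sPrice_of_ae_le hae hatom (ae_le_of_uPrice_zero hae hl h)

include hae hl in
lemma uPrice_inj {a b : ℝ} (hab : a < b) (h : uPrice μ a = uPrice μ b) : uPrice μ a = 0 := by
  have hsub : ∫ v, (max (v - a) 0 - max (v - b) 0) ∂μ = 0 := by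
    rw [integral_sub (A1.integrable_maxsub hae hl a) (A1.integrable_maxsub hae hl b)]
    rw [← uPrice, ← uPrice, h]; ring
  have hpt : ∀ v, 0 ≤ max (v - a) 0 - max (v - b) 0 := fun v => by
    rcases le_or_gt (v - b) 0 with h1 | h1
    · rw [max_eq_right h1]; simp [le_max_right]
    · rw [max_eq_left h1.le, max_eq_left (by linarith : (0:ℝ) ≤ v - a)]; linarith
  have h0 : (fun v => max (v - a) 0 - max (v - b) 0) =ᵐ[μ] fun _ => (0:ℝ) :=
    (integral_eq_zero_iff_of_nonneg hpt ((A1.integrable_maxsub hae hl a).sub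
      (A1.integrable_maxsub hae hl b))).mp hsub
  have hle : ∀ᵐ v ∂μ, v ≤ a := by
    filter_upwards [h0] with v hv
    by_contra hc
    push_neg at hc
    have h2 : max (v - a) 0 = v - a := max_eq_left (by linarith)
    rcases le_or_gt (v - b) 0 with h1 | h1
    · rw [h2, max_eq_right h1] at hv; linarith
    · rw [h2, max_eq_left h1.le] at hv; linarith
  have : (fun v => max (v - a) 0) =ᵐ[μ] fun _ => (0:ℝ) := by
    filter_upwards [hle] with v hv
    exact max_eq_right (by linarith)
  rw [uPrice, integral_congr_ae this, integral_zero]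

include hae hl hatom in
lemma sPrice_cont : Continuous (sPrice μ) := by
  rw [continuous_iff_continuousAt]
  intro r₀
  have : Filter.Tendsto (fun r => sPrice μ r) (nhds r₀) (nhds (sPrice μ r₀)) := by
    refine tendsto_integral_filter_of_dominated_convergence (fun _ => |hb|) ?_ ?_
      (integrable_const _) ?_
    · refine Filter.Eventually.of_forall fun r => ?_
      exact (Measurable.ite measurableSet_Ici measurable_id measurable_const).aestronglyMeasurable
    · refine Filter.Eventually.of_forall fun r => ?_
      filter_upwards [A1.ae_abs_le hae hl] with v hv
      rw [Real.norm_eq_abs]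
      split_ifs
      · exact hv
      · simp
    · filter_upwards [ae_ne hatom r₀] with v hv
      rcases lt_or_gt_of_ne hv with h | h
      · -- v < r₀ : eventually r > v, value 0
        have hev : ∀ᶠ r in nhds r₀, (if r ≤ v then v else 0) = (0:ℝ) := by
          filter_upwards [eventually_gt_nhds h] with r hr
          rw [if_neg (not_le.mpr hr)]
        rw [if_neg (not_le.mpr h)]
        exact Filter.Tendsto.congr' (hev.mono fun r h => h.symm) tendsto_const_nhds
      · have hev : ∀ᶠ r in nhds r₀, (if r ≤ v then v else 0) = v := by
          filter_upwards [eventually_lt_nhds h] with r hr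
          rw [if_pos hr.le]
        rw [if_pos h.le]
        exact Filter.Tendsto.congr' (hev.mono fun r h => h.symm) tendsto_const_nhds
  exact this

end B1

namespace C1
open Stmt13
variable {μ : Measure ℝ} {l hb : ℝ} {p₁ p₂ α : ℝ}

lemma stepU_eq (hp : p₁ ≤ p₂) (v : ℝ) :
    v * stepX p₁ p₂ α v - stepP p₁ p₂ α v
      = α * max (v - p₁) 0 + (1 - α) * max (v - p₂) 0 := by
  unfold stepX stepP
  rcases lt_or_ge v p₁ with h1 | h1
  · rw [if_pos h1, if_pos h1, max_eq_right (by linarith), max_eq_right (by linarith)]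
    ring
  · rcases lt_or_ge v p₂ with h2 | h2
    · rw [if_neg (not_lt.mpr h1), if_neg (not_lt.mpr h1), if_pos h2, if_pos h2,
        max_eq_left (by linarith), max_eq_right (by linarith)]
      ring
    · rw [if_neg (not_lt.mpr h1), if_neg (not_lt.mpr h1), if_neg (not_lt.mpr h2),
        if_neg (not_lt.mpr h2), max_eq_left (by linarith), max_eq_left (by linarith)]
      ring

lemma stepS_eq (hp : p₁ ≤ p₂) (v : ℝ) :
    v * stepX p₁ p₂ α v
      = α * (if p₁ ≤ v then v else 0) + (1 - α) * (if p₂ ≤ v then v else 0) := by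
  unfold stepX
  rcases lt_or_ge v p₁ with h1 | h1
  · rw [if_pos h1, if_neg (not_le.mpr h1), if_neg (not_le.mpr (lt_of_lt_of_le h1 hp))]
    ring
  · rcases lt_or_ge v p₂ with h2 | h2
    · rw [if_neg (not_lt.mpr h1), if_pos h2, if_pos h1, if_neg (not_le.mpr h2)]
      ring
    · rw [if_neg (not_lt.mpr h1), if_neg (not_lt.mpr h2), if_pos h1, if_pos h2]
      ring

lemma stepX_mem (hα : α ∈ Set.Icc (0:ℝ) 1) (v : ℝ) : stepX p₁ p₂ α v ∈ Set.Icc (0:ℝ) 1 := by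
  unfold stepX
  split_ifs
  · exact ⟨le_rfl, zero_le_one⟩
  · exact hα
  · exact ⟨zero_le_one, le_rfl⟩

lemma step_IC (hp : p₁ ≤ p₂) (hα : α ∈ Set.Icc (0:ℝ) 1) (v v' : ℝ) :
    v * stepX p₁ p₂ α v' - stepP p₁ p₂ α v' ≤ v * stepX p₁ p₂ α v - stepP p₁ p₂ α v := by
  rw [stepU_eq hp v]
  obtain ⟨hα0, hα1⟩ := hα
  have m1 : v - p₁ ≤ max (v - p₁) 0 := le_max_left _ _
  have m1' : (0:ℝ) ≤ max (v - p₁) 0 := le_max_right _ _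
  have m2 : v - p₂ ≤ max (v - p₂) 0 := le_max_left _ _
  have m2' : (0:ℝ) ≤ max (v - p₂) 0 := le_max_right _ _
  unfold stepX stepP
  split_ifs
  · nlinarith
  · nlinarith
  · nlinarith

lemma step_IR (hp : p₁ ≤ p₂) (hα : α ∈ Set.Icc (0:ℝ) 1) (v : ℝ) :
    0 ≤ v * stepX p₁ p₂ α v - stepP p₁ p₂ α v := by
  rw [stepU_eq hp v]
  obtain ⟨hα0, hα1⟩ := hα
  have m1' : (0:ℝ) ≤ max (v - p₁) 0 := le_max_right _ _
  have m2' : (0:ℝ) ≤ max (v - p₂) 0 := le_max_right _ _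
  nlinarith

variable (hae : ∀ᵐ v ∂μ, v ∈ Set.Icc l hb) (hl : 0 ≤ l) [IsProbabilityMeasure μ]

include hae hl in
lemma step_utility (hp : p₁ ≤ p₂) :
    (∫ v, (v * stepX p₁ p₂ α v - stepP p₁ p₂ α v) ∂μ)
      = α * uPrice μ p₁ + (1 - α) * uPrice μ p₂ := by
  have : (fun v => v * stepX p₁ p₂ α v - stepP p₁ p₂ α v)
      = fun v => α * max (v - p₁) 0 + (1 - α) * max (v - p₂) 0 := funext (stepU_eq hp)
  rw [this, integral_add ((A1.integrable_maxsub hae hl p₁).const_mul α)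
    ((A1.integrable_maxsub hae hl p₂).const_mul (1 - α)),
    MeasureTheory.integral_const_mul, MeasureTheory.integral_const_mul, uPrice, uPrice]

include hae hl in
lemma step_surplus (hp : p₁ ≤ p₂) :
    (∫ v, v * stepX p₁ p₂ α v ∂μ)
      = α * sPrice μ p₁ + (1 - α) * sPrice μ p₂ := by
  have : (fun v => v * stepX p₁ p₂ α v)
      = fun v => α * (if p₁ ≤ v then v else 0) + (1 - α) * (if p₂ ≤ v then v else 0) :=
    funext (stepS_eq hp)
  rw [this, integral_add ((A1.integrable_ifge hae hl p₁).const_mul α)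
    ((A1.integrable_ifge hae hl p₂).const_mul (1 - α)),
    MeasureTheory.integral_const_mul, MeasureTheory.integral_const_mul, sPrice, sPrice]

end C1

namespace D1

/-- clamp to `[l,hb]` -/
noncomputable def clamp (l hb v : ℝ) : ℝ := max l (min v hb)

lemma clamp_mem {l hb : ℝ} (hlh : l ≤ hb) (v : ℝ) : clamp l hb v ∈ Set.Icc l hb :=
  ⟨le_max_left _ _, max_le hlh (min_le_right _ _)⟩

lemma clamp_eq {l hb v : ℝ} (hv : v ∈ Set.Icc l hb) : clamp l hb v = v := by
  rw [clamp, min_eq_left hv.2, max_eq_right hv.1]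

lemma clamp_mono {l hb : ℝ} : Monotone (clamp l hb) := fun a b hab =>
  max_le_max le_rfl (min_le_min hab le_rfl)

variable {l hb : ℝ} {x p : ℝ → ℝ}
variable (hlh : l ≤ hb) (hx : ∀ v, x v ∈ Set.Icc (0:ℝ) 1)
  (hIC : ∀ v ∈ Set.Icc l hb, ∀ v' ∈ Set.Icc l hb, v * x v' - p v' ≤ v * x v - p v)
  (hIR : ∀ v ∈ Set.Icc l hb, 0 ≤ v * x v - p v)

include hlh hIC in
lemma chi_mono : Monotone (fun v => x (clamp l hb v)) := by
  intro a b hab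
  set a' := clamp l hb a with ha'
  set b' := clamp l hb b with hb'
  have hma : a' ∈ Set.Icc l hb := clamp_mem hlh a
  have hmb : b' ∈ Set.Icc l hb := clamp_mem hlh b
  have hab' : a' ≤ b' := clamp_mono hab
  rcases eq_or_lt_of_le hab' with h | h
  · show x a' ≤ x b'
    rw [h]
  · have h1 := hIC a' hma b' hmb
    have h2 := hIC b' hmb a' hma
    nlinarith

include hlh hIC hx in
lemma U_mono : Monotone (fun v => clamp l hb v * x (clamp l hb v) - p (clamp l hb v)) := by
  intro a b hab
  set a' := clamp l hb a
  set b' := clamp l hb b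
  have hma : a' ∈ Set.Icc l hb := clamp_mem hlh a
  have hmb : b' ∈ Set.Icc l hb := clamp_mem hlh b
  have hab' : a' ≤ b' := clamp_mono hab
  have h1 := hIC b' hmb a' hma
  have h2 := (hx a').1
  simp only
  nlinarith

include hlh hIR in
lemma U_nonneg (v : ℝ) : 0 ≤ clamp l hb v * x (clamp l hb v) - p (clamp l hb v) :=
  hIR _ (clamp_mem hlh v)

include hIC in
lemma U_subgrad {a b : ℝ} (ha : a ∈ Set.Icc l hb) (hb' : b ∈ Set.Icc l hb) (hab : a ≤ b) :
    (b - a) * x a ≤ (b * x b - p b) - (a * x a - p a) := by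
  have h1 := hIC b hb' a ha
  linarith

/-- Monotone subgradient implies the integral lower bound (Darboux sums). -/
lemma darboux {g U : ℝ → ℝ} (hg : Monotone g) (hg0 : ∀ t, 0 ≤ g t) (hg1 : ∀ t, g t ≤ 1)
    (hsub : ∀ a b, a ∈ Set.Icc l hb → b ∈ Set.Icc l hb → a ≤ b → (b - a) * g a ≤ U b - U a)
    {v : ℝ} (hv : v ∈ Set.Icc l hb) : ∫ t in l..v, g t ≤ U v - U l := by
  have hlv : l ≤ v := hv.1
  refine le_of_forall_pos_le_add fun ε hε => ?_
  obtain ⟨n, hn⟩ := exists_nat_gt ((v - l) / ε)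
  have hn0 : 0 < (n:ℝ) + 1 := by positivity
  set m : ℕ := n + 1 with hm
  have hmpos : 0 < (m:ℝ) := by push_cast [hm]; linarith
  set δ : ℝ := (v - l) / m with hδ
  have hδ0 : 0 ≤ δ := div_nonneg (by linarith) hmpos.le
  have hδε : δ ≤ ε := by
    rw [hδ, div_le_iff₀ hmpos]
    have h1 : (v - l) / ε < m := by push_cast [hm]; linarith
    rw [div_lt_iff₀ hε] at h1
    nlinarith
  set a : ℕ → ℝ := fun i => l + i * δ with ha
  have ha0 : a 0 = l := by simp [ha]
  have ham : a m = v := by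
    rw [ha, hδ]
    field_simp
    ring
  have hamono : ∀ i j : ℕ, i ≤ j → a i ≤ a j := fun i j hij => by
    simp only [ha]
    have : (i:ℝ) ≤ j := Nat.cast_le.mpr hij
    nlinarith
  have hmem : ∀ i, i ≤ m → a i ∈ Set.Icc l hb := fun i hi => by
    constructor
    · rw [← ha0]; exact hamono 0 i (Nat.zero_le _)
    · calc a i ≤ a m := hamono i m hi
        _ = v := ham
        _ ≤ hb := hv.2
  have hint : ∀ i, IntervalIntegrable g MeasureTheory.volume (a i) (a (i + 1)) :=
    fun i => hg.intervalIntegrable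
  have hsum : ∑ i ∈ Finset.range m, ∫ t in a i..a (i+1), g t = ∫ t in l..v, g t := by
    rw [intervalIntegral.sum_integral_adjacent_intervals fun i _ => hint i, ha0, ham]
  have hstep : ∀ i ∈ Finset.range m, ∫ t in a i..a (i+1), g t ≤ δ * g (a (i+1)) := by
    intro i hi
    have hle : a i ≤ a (i+1) := hamono i (i+1) (Nat.le_succ i)
    calc ∫ t in a i..a (i+1), g t ≤ ∫ _ in a i..a (i+1), g (a (i+1)) := by
          refine intervalIntegral.integral_mono_on hle (hint i)
            intervalIntegrable_const fun t ht => hg ht.2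
      _ = (a (i+1) - a i) * g (a (i+1)) := by
          rw [intervalIntegral.integral_const, smul_eq_mul]
      _ = δ * g (a (i+1)) := by
          have : a (i+1) - a i = δ := by simp [ha]; push_cast; ring
          rw [this]
  have htel : ∑ i ∈ Finset.range m, (δ * g (a (i+1)) - δ * g (a i))
      = δ * g (a m) - δ * g (a 0) := Finset.sum_range_sub (fun i => δ * g (a i)) m
  have htel2 : ∑ i ∈ Finset.range m, ((U (a (i+1))) - U (a i)) = U (a m) - U (a 0) :=
    Finset.sum_range_sub (fun i => U (a i)) m
  have hlow : ∀ i ∈ Finset.range m, δ * g (a i) ≤ U (a (i+1)) - U (a i) := by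
    intro i hi
    have hilt : i < m := Finset.mem_range.mp hi
    have h := hsub (a i) (a (i+1)) (hmem i hilt.le) (hmem (i+1) hilt)
      (hamono i (i+1) (Nat.le_succ i))
    have : a (i+1) - a i = δ := by simp [ha]; push_cast; ring
    rw [this] at h
    exact h
  calc ∫ t in l..v, g t = ∑ i ∈ Finset.range m, ∫ t in a i..a (i+1), g t := hsum.symm
    _ ≤ ∑ i ∈ Finset.range m, δ * g (a (i+1)) := Finset.sum_le_sum hstep
    _ = ∑ i ∈ Finset.range m, δ * g (a i) + (δ * g (a m) - δ * g (a 0)) := by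
        rw [← htel, Finset.sum_sub_distrib]
        ring
    _ ≤ ∑ i ∈ Finset.range m, (U (a (i+1)) - U (a i)) + δ := by
        have h1 : δ * g (a m) - δ * g (a 0) ≤ δ := by nlinarith [hg0 (a 0), hg1 (a m)]
        exact add_le_add (Finset.sum_le_sum hlow) h1
    _ = U v - U l + δ := by rw [htel2, ha0, ham]
    _ ≤ U v - U l + ε := by linarith

end D1

namespace E1
open Stmt13

/-- threshold price corresponding to level `s` of a monotone allocation -/
noncomputable def rfn (l hb : ℝ) (χ : ℝ → ℝ) (s : ℝ) : ℝ :=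
  sInf ({t ∈ Set.Icc l hb | s < χ t} ∪ {hb})

variable {μ : Measure ℝ} {l hb : ℝ} {χ : ℝ → ℝ}

lemma rfn_bddBelow (hlh : l ≤ hb) (s : ℝ) :
    ∀ w ∈ ({t ∈ Set.Icc l hb | s < χ t} ∪ {hb}), l ≤ w := by
  rintro w (⟨hw, _⟩ | hw)
  · exact hw.1
  · simp only [Set.mem_singleton_iff] at hw; rw [hw]; exact hlh

lemma rfn_mem (hlh : l ≤ hb) (s : ℝ) : rfn l hb χ s ∈ Set.Icc l hb := by
  constructor
  · exact le_csInf ⟨hb, Or.inr rfl⟩ (rfn_bddBelow hlh s)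
  · exact csInf_le ⟨l, rfn_bddBelow hlh s⟩ (Or.inr rfl)

lemma rfn_mono (hlh : l ≤ hb) : Monotone (rfn l hb χ) := by
  intro s s' hss
  refine csInf_le_csInf ⟨l, rfn_bddBelow hlh s⟩ ⟨hb, Or.inr rfl⟩ ?_
  rintro w (⟨hw1, hw2⟩ | hw)
  · exact Or.inl ⟨hw1, lt_of_le_of_lt hss hw2⟩
  · exact Or.inr hw

lemma rfn_le (hlh : l ≤ hb) {s t : ℝ} (ht : t ∈ Set.Icc l hb) (h : s < χ t) :
    rfn l hb χ s ≤ t :=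
  csInf_le ⟨l, rfn_bddBelow hlh s⟩ (Or.inl ⟨ht, h⟩)

lemma lt_rfn (hχm : Monotone χ) {s t : ℝ} (ht : t ∈ Set.Icc l hb)
    (h : rfn l hb χ s < t) : s < χ t := by
  obtain ⟨w, hw, hwt⟩ := exists_lt_of_csInf_lt ⟨hb, Or.inr rfl⟩ h
  rcases hw with ⟨_, hw2⟩ | hw
  · exact lt_of_lt_of_le hw2 (hχm hwt.le)
  · simp only [Set.mem_singleton_iff] at hw
    rw [hw] at hwt
    exact absurd hwt (not_lt.mpr ht.2)

variable [IsProbabilityMeasure μ]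
variable (hae : ∀ᵐ v ∂μ, v ∈ Set.Icc l hb) (hl : 0 ≤ l) (hlh : l ≤ hb)
  (hatom : ∀ a : ℝ, μ {a} = 0)
  (hχm : Monotone χ) (hχ01 : ∀ t, χ t ∈ Set.Icc (0:ℝ) 1)

lemma ae_prod_fst {ν : Measure ℝ} [MeasureTheory.SFinite ν] {s : Set ℝ} (h : ∀ᵐ v ∂μ, v ∈ s) :
    ∀ᵐ z ∂(μ.prod ν), z.1 ∈ s := by
  rw [MeasureTheory.ae_iff] at *
  have he : {z : ℝ × ℝ | ¬ z.1 ∈ s} = {v | ¬ v ∈ s} ×ˢ (Set.univ : Set ℝ) := by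
    ext z; simp
  rw [he, MeasureTheory.Measure.prod_prod, h, zero_mul]

include hae hl hlh hatom hχm hχ01 in
lemma layer_surplus :
    ∫ v, v * χ v ∂μ
      = ∫ s in Set.Ioo (0:ℝ) 1, sPrice μ (rfn l hb χ s) := by
  set ν := MeasureTheory.volume.restrict (Set.Ioo (0:ℝ) 1) with hν
  set F : ℝ → ℝ → ℝ := fun v s => if s < χ v then v else 0 with hF
  have stepA : ∀ v, ∫ s, F v s ∂ν = v * χ v := by
    intro v
    have h1 : (fun s => F v s) = Set.indicator (Set.Iio (χ v)) (fun _ => v) := by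
      funext s
      simp only [hF, Set.indicator, Set.mem_Iio]
    rw [h1, MeasureTheory.integral_indicator measurableSet_Iio, setIntegral_const, hν,
      measureReal_def, MeasureTheory.Measure.restrict_apply measurableSet_Iio]
    have h2 : Set.Iio (χ v) ∩ Set.Ioo (0:ℝ) 1 = Set.Ioo 0 (χ v) := by
      ext s
      simp only [Set.mem_inter_iff, Set.mem_Iio, Set.mem_Ioo]
      constructor
      · rintro ⟨h3, h4, h5⟩; exact ⟨h4, h3⟩
      · rintro ⟨h4, h3⟩; exact ⟨h3, h4, lt_of_lt_of_le h3 (hχ01 v).2⟩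
    rw [h2, Real.volume_Ioo, sub_zero, ENNReal.toReal_ofReal (hχ01 v).1, smul_eq_mul]
    ring
  have hmeasF : Measurable (Function.uncurry F) := by
    have hset : MeasurableSet {z : ℝ × ℝ | z.2 < χ z.1} :=
      measurableSet_lt measurable_snd ((hχm.measurable).comp measurable_fst)
    exact Measurable.ite hset measurable_fst measurable_const
  have hintF : MeasureTheory.Integrable (Function.uncurry F) (μ.prod ν) := by
    refine MeasureTheory.Integrable.mono' (integrable_const |hb|)
      hmeasF.aestronglyMeasurable ?_
    have h := ae_prod_fst (ν := ν) (s := {v : ℝ | |v| ≤ |hb|}) (A1.ae_abs_le hae hl)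
    filter_upwards [h] with z hz
    simp only [Function.uncurry, hF, Real.norm_eq_abs]
    split_ifs
    · exact hz
    · simp
  have swap := MeasureTheory.integral_integral_swap hintF
  have stepD : ∀ s, ∫ v, F v s ∂μ = sPrice μ (rfn l hb χ s) := by
    intro s
    refine integral_congr_ae ?_
    filter_upwards [hae, B1.ae_ne hatom (rfn l hb χ s)] with v hv hne
    simp only [hF]
    rcases lt_or_ge s (χ v) with h | h
    · rw [if_pos h, if_pos (rfn_le hlh hv h)]
    · rw [if_neg (not_lt.mpr h)]
      have : ¬ rfn l hb χ s ≤ v := by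
        intro hc
        have : rfn l hb χ s < v := lt_of_le_of_ne hc (Ne.symm hne)
        exact absurd (lt_rfn hχm hv this) (not_lt.mpr h)
      rw [if_neg this]
  calc ∫ v, v * χ v ∂μ = ∫ v, ∫ s, F v s ∂ν ∂μ := by
        refine integral_congr_ae (Filter.Eventually.of_forall fun v => ?_)
        exact (stepA v).symm
    _ = ∫ s, ∫ v, F v s ∂μ ∂ν := swap
    _ = ∫ s in Set.Ioo (0:ℝ) 1, sPrice μ (rfn l hb χ s) := by
        rw [hν]
        exact integral_congr_ae (Filter.Eventually.of_forall fun s => stepD s)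

end E1

namespace E1
open Stmt13
variable {μ : Measure ℝ} {l hb : ℝ} {χ : ℝ → ℝ}
variable [IsProbabilityMeasure μ]
variable (hlh : l ≤ hb) (hχm : Monotone χ) (hχ01 : ∀ t, χ t ∈ Set.Icc (0:ℝ) 1)

include hlh hχm hχ01 in
lemma layer_utility {v : ℝ} (hv : v ∈ Set.Icc l hb) :
    ∫ s in Set.Ioo (0:ℝ) 1, max (v - rfn l hb χ s) 0 ≤ ∫ t in l..v, χ t := by
  set ν := MeasureTheory.volume.restrict (Set.Ioo (0:ℝ) 1) with hν
  set τ := MeasureTheory.volume.restrict (Set.Ioo l v) with hτ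
  set G : ℝ → ℝ → ℝ := fun s t => if rfn l hb χ s < t then 1 else 0 with hG
  have hrmeas : Measurable (rfn l hb χ) := (rfn_mono hlh).measurable
  have stepA : ∀ s, ∫ t, G s t ∂τ = max (v - rfn l hb χ s) 0 := by
    intro s
    have h1 : (fun t => G s t) = Set.indicator (Set.Ioi (rfn l hb χ s)) (fun _ => (1:ℝ)) := by
      funext t
      simp only [hG, Set.indicator, Set.mem_Ioi]
    rw [h1, MeasureTheory.integral_indicator measurableSet_Ioi, setIntegral_const, hτ,
      measureReal_def, MeasureTheory.Measure.restrict_apply measurableSet_Ioi]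
    have h2 : Set.Ioi (rfn l hb χ s) ∩ Set.Ioo l v = Set.Ioo (rfn l hb χ s) v := by
      ext t
      simp only [Set.mem_inter_iff, Set.mem_Ioi, Set.mem_Ioo]
      have hrl : l ≤ rfn l hb χ s := (rfn_mem hlh s).1
      constructor
      · rintro ⟨h3, _, h5⟩; exact ⟨h3, h5⟩
      · rintro ⟨h3, h5⟩; exact ⟨h3, lt_of_le_of_lt hrl h3, h5⟩
    rw [h2, Real.volume_Ioo, smul_eq_mul, mul_one]
    rcases le_or_gt (v - rfn l hb χ s) 0 with h | h
    · rw [ENNReal.ofReal_eq_zero.mpr h, ENNReal.toReal_zero, max_eq_right h]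
    · rw [ENNReal.toReal_ofReal h.le, max_eq_left h.le]
  have hmeasG : Measurable (Function.uncurry G) := by
    have hset : MeasurableSet {z : ℝ × ℝ | rfn l hb χ z.1 < z.2} :=
      measurableSet_lt (hrmeas.comp measurable_fst) measurable_snd
    exact Measurable.ite hset measurable_const measurable_const
  have hintG : MeasureTheory.Integrable (Function.uncurry G) (ν.prod τ) := by
    refine MeasureTheory.Integrable.mono' (integrable_const 1)
      hmeasG.aestronglyMeasurable ?_
    refine Filter.Eventually.of_forall fun z => ?_
    simp only [Function.uncurry, hG, Real.norm_eq_abs]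
    split_ifs <;> simp
  have swap := MeasureTheory.integral_integral_swap hintG
  -- inner bound in t
  have stepD : ∀ t ∈ Set.Ioo l v, ∫ s, G s t ∂ν ≤ χ t := by
    intro t ht
    have htm : t ∈ Set.Icc l hb := ⟨ht.1.le, ht.2.le.trans hv.2⟩
    have h1 : (fun s => G s t) = Set.indicator {s : ℝ | rfn l hb χ s < t} (fun _ => (1:ℝ)) := by
      funext s
      simp only [hG, Set.indicator, Set.mem_setOf_eq]
    have hsm : MeasurableSet {s : ℝ | rfn l hb χ s < t} := measurableSet_lt hrmeas measurable_const
    rw [h1, MeasureTheory.integral_indicator hsm, setIntegral_const, smul_eq_mul, mul_one, hν,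
      measureReal_def, MeasureTheory.Measure.restrict_apply hsm]
    have hsub : {s : ℝ | rfn l hb χ s < t} ∩ Set.Ioo 0 1 ⊆ Set.Ioo 0 (χ t) := by
      rintro s ⟨hs1, hs2, _⟩
      exact ⟨hs2, lt_rfn hχm htm hs1⟩
    calc (MeasureTheory.volume ({s : ℝ | rfn l hb χ s < t} ∩ Set.Ioo 0 1)).toReal
        ≤ (MeasureTheory.volume (Set.Ioo 0 (χ t))).toReal := by
          refine ENNReal.toReal_mono ?_ (measure_mono hsub)
          simp [Real.volume_Ioo]
      _ = χ t := by rw [Real.volume_Ioo, sub_zero, ENNReal.toReal_ofReal (hχ01 t).1]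
  -- monotone in t, for measurability of inner integral
  have hmono_inner : Monotone (fun t => ∫ s, G s t ∂ν) := by
    intro t1 t2 h12
    refine integral_mono ?_ ?_ ?_
    · exact MeasureTheory.Integrable.mono' (integrable_const 1)
        (hmeasG.comp (measurable_id.prodMk measurable_const)).aestronglyMeasurable
        (Filter.Eventually.of_forall fun s => by
          simp only [hG, Real.norm_eq_abs]; split_ifs <;> simp)
    · exact MeasureTheory.Integrable.mono' (integrable_const 1)
        (hmeasG.comp (measurable_id.prodMk measurable_const)).aestronglyMeasurable
        (Filter.Eventually.of_forall fun s => by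
          simp only [hG, Real.norm_eq_abs]; split_ifs <;> simp)
    · intro s
      simp only [hG]
      split_ifs with h1 h2
      · exact le_rfl
      · exact absurd (lt_of_lt_of_le h1 h12) h2
      · exact zero_le_one
      · exact le_rfl
  calc ∫ s in Set.Ioo (0:ℝ) 1, max (v - rfn l hb χ s) 0
      = ∫ s, ∫ t, G s t ∂τ ∂ν := by
        rw [hν]
        exact (integral_congr_ae (Filter.Eventually.of_forall fun s => stepA s)).symm
    _ = ∫ t, ∫ s, G s t ∂ν ∂τ := swap
    _ ≤ ∫ t, χ t ∂τ := by
        rw [hτ]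
        refine setIntegral_mono_on ?_ ?_ measurableSet_Ioo stepD
        · refine MeasureTheory.Integrable.mono' (integrable_const 1)
            (hmono_inner.measurable).aestronglyMeasurable ?_
          refine Filter.Eventually.of_forall fun t => ?_
          rw [Real.norm_eq_abs, abs_le]
          constructor
          · refine le_trans (by norm_num) (integral_nonneg fun s => ?_)
            simp only [hG]; split_ifs <;> norm_num
          · refine le_trans (integral_mono ?_ (integrable_const 1) fun s => ?_) ?_
            · exact MeasureTheory.Integrable.mono' (integrable_const 1)
                (hmeasG.comp (measurable_id.prodMk measurable_const)).aestronglyMeasurable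
                (Filter.Eventually.of_forall fun s => by
                  simp only [hG, Real.norm_eq_abs]; split_ifs <;> simp)
            · simp only [hG]; split_ifs <;> norm_num
            · simp [hν]
        · show MeasureTheory.IntegrableOn χ (Set.Ioo l v) MeasureTheory.volume
          exact (hχm.intervalIntegrable).1.mono_set Set.Ioo_subset_Ioc_self
    _ = ∫ t in l..v, χ t := by
        rw [hτ, intervalIntegral.integral_of_le hv.1, MeasureTheory.integral_Ioc_eq_integral_Ioo]

end E1

namespace F1
open Stmt13 D1 E1

variable {μ : Measure ℝ} {l hb : ℝ} {x p : ℝ → ℝ}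
variable [IsProbabilityMeasure μ]
variable (hae : ∀ᵐ v ∂μ, v ∈ Set.Icc l hb) (hl : 0 ≤ l) (hlh : l ≤ hb)
  (hatom : ∀ a : ℝ, μ {a} = 0)
  (hx : ∀ v, x v ∈ Set.Icc (0:ℝ) 1)
  (hIC : ∀ v ∈ Set.Icc l hb, ∀ v' ∈ Set.Icc l hb, v * x v' - p v' ≤ v * x v - p v)
  (hIR : ∀ v ∈ Set.Icc l hb, 0 ≤ v * x v - p v)

include hae hl hlh hatom hx hIC hIR in
lemma core (lam : ℝ) (hlam : 0 ≤ lam) (M : ℝ)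
    (hM : ∀ ρ ∈ Set.Icc l hb, sPrice μ ρ - lam * uPrice μ ρ ≤ M) :
    ∫ v, v * x v ∂μ ≤ M + lam * ∫ v, (v * x v - p v) ∂μ := by
  set χ : ℝ → ℝ := fun v => x (clamp l hb v) with hχ
  set U : ℝ → ℝ := fun v => clamp l hb v * x (clamp l hb v) - p (clamp l hb v) with hU
  set r : ℝ → ℝ := rfn l hb χ with hr
  set ν := MeasureTheory.volume.restrict (Set.Ioo (0:ℝ) 1) with hν
  have hχm : Monotone χ := chi_mono hlh hIC
  have hχ01 : ∀ t, χ t ∈ Set.Icc (0:ℝ) 1 := fun t => hx _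
  have hUm : Monotone U := U_mono hlh hx hIC
  have hUv : ∀ v, U v = U (clamp l hb v) := by
    intro v
    simp only [hU, clamp_eq (clamp_mem hlh v)]
  have hUbd : ∀ v, |U v| ≤ |U l| + |U hb| := by
    intro v
    have h1 : U l ≤ U v := by
      rw [hUv v]; exact hUm (clamp_mem hlh v).1
    have h2 : U v ≤ U hb := by
      rw [hUv v]; exact hUm (clamp_mem hlh v).2
    rw [abs_le]
    constructor
    · linarith [neg_abs_le (U l), abs_nonneg (U hb)]
    · linarith [le_abs_self (U hb), abs_nonneg (U l)]
  have hU_int : MeasureTheory.Integrable U μ :=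
    A1.integrable_of_bdd hUm.measurable.aestronglyMeasurable (|U l| + |U hb|)
      (Filter.Eventually.of_forall hUbd)
  have hvχ_int : MeasureTheory.Integrable (fun v => v * χ v) μ := by
    refine A1.integrable_of_bdd (measurable_id.mul hχm.measurable).aestronglyMeasurable |hb| ?_
    filter_upwards [A1.ae_abs_le hae hl] with v hv
    calc |v * χ v| = |v| * |χ v| := abs_mul _ _
      _ ≤ |hb| * 1 := by
          refine mul_le_mul hv ?_ (abs_nonneg _) (abs_nonneg _)
          rw [abs_le]; exact ⟨by linarith [(hχ01 v).1], (hχ01 v).2⟩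
      _ = |hb| := mul_one _
  have hsx : ∫ v, v * x v ∂μ = ∫ v, v * χ v ∂μ := by
    refine integral_congr_ae ?_
    filter_upwards [hae] with v hv
    simp only [hχ, clamp_eq hv]
  have hux : ∫ v, (v * x v - p v) ∂μ = ∫ v, U v ∂μ := by
    refine integral_congr_ae ?_
    filter_upwards [hae] with v hv
    simp only [hU, clamp_eq hv]
  -- surplus layer cake
  have hsurp : ∫ v, v * χ v ∂μ = ∫ s in Set.Ioo (0:ℝ) 1, sPrice μ (r s) :=
    layer_surplus hae hl hlh hatom hχm hχ01
  -- utility lower bound, pointwise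
  have hpt : ∀ v, (∫ s in Set.Ioo (0:ℝ) 1, max (clamp l hb v - r s) 0) ≤ U v := by
    intro v
    have hcm := clamp_mem hlh v
    have hsub : ∀ a b, a ∈ Set.Icc l hb → b ∈ Set.Icc l hb → a ≤ b →
        (b - a) * χ a ≤ U b - U a := by
      intro a b ha hb' hab
      have := U_subgrad hIC ha hb' hab
      simpa only [hχ, hU, clamp_eq ha, clamp_eq hb'] using this
    have hd : ∫ t in l..(clamp l hb v), χ t ≤ U (clamp l hb v) - U l :=
      darboux hχm (fun t => (hχ01 t).1) (fun t => (hχ01 t).2) hsub hcm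
    have hlu : ∫ s in Set.Ioo (0:ℝ) 1, max (clamp l hb v - r s) 0
        ≤ ∫ t in l..(clamp l hb v), χ t := layer_utility hlh hχm hχ01 hcm
    have h0 : 0 ≤ U l := by
      have := hIR l ⟨le_rfl, hlh⟩
      simpa only [hU, clamp_eq (Set.mem_Icc.mpr ⟨le_rfl, hlh⟩)] using this
    calc ∫ s in Set.Ioo (0:ℝ) 1, max (clamp l hb v - r s) 0
        ≤ U (clamp l hb v) - U l := le_trans hlu hd
      _ ≤ U (clamp l hb v) := by linarith
      _ = U v := (hUv v).symm
  -- Fubini for the Ψ function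
  set H : ℝ → ℝ → ℝ := fun v s => max (clamp l hb v - r s) 0 with hH
  have hHbd : ∀ v s, |H v s| ≤ |hb - l| := by
    intro v s
    have h1 := (clamp_mem hlh v).2
    have h2 := (rfn_mem (χ := χ) hlh s).1
    simp only [hH]
    rw [abs_of_nonneg (le_max_right _ _)]
    rcases le_or_gt (clamp l hb v - r s) 0 with h | h
    · rw [max_eq_right h]; positivity
    · rw [max_eq_left h.le]
      have : clamp l hb v - r s ≤ hb - l := by
        simp only [hr] at h2 ⊢
        linarith
      exact this.trans (le_abs_self _)
  have hHmeas : Measurable (Function.uncurry H) :=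
    ((clamp_mono.measurable.comp measurable_fst).sub
      (((rfn_mono hlh).measurable).comp measurable_snd)).max measurable_const
  have hH_int : MeasureTheory.Integrable (Function.uncurry H) (μ.prod ν) :=
    MeasureTheory.Integrable.mono' (integrable_const |hb - l|)
      hHmeas.aestronglyMeasurable
      (Filter.Eventually.of_forall fun z => by
        rw [Real.norm_eq_abs]; exact hHbd z.1 z.2)
  have hswap : ∫ v, ∫ s, H v s ∂ν ∂μ = ∫ s, ∫ v, H v s ∂μ ∂ν :=
    MeasureTheory.integral_integral_swap hH_int
  have hinner : ∀ s, ∫ v, H v s ∂μ = uPrice μ (r s) := by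
    intro s
    refine integral_congr_ae ?_
    filter_upwards [hae] with v hv
    simp only [hH, clamp_eq hv]
  have hHint1 : ∀ v, MeasureTheory.Integrable (fun s => H v s) ν := fun v =>
    MeasureTheory.Integrable.mono' (integrable_const |hb - l|)
      (hHmeas.comp (measurable_const.prodMk measurable_id)).aestronglyMeasurable
      (Filter.Eventually.of_forall fun s => by rw [Real.norm_eq_abs]; exact hHbd v s)
  have hΨmono : Monotone (fun v => ∫ s, H v s ∂ν) := by
    intro v1 v2 h12
    refine integral_mono (hHint1 v1) (hHint1 v2) fun s => ?_
    exact max_le_max (by linarith [clamp_mono (l := l) (hb := hb) h12]) le_rfl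
  have hΨbd : ∀ v, |∫ s, H v s ∂ν| ≤ |hb - l| := by
    intro v
    rw [abs_le]
    constructor
    · have h1 : 0 ≤ ∫ s, H v s ∂ν := integral_nonneg fun s => le_max_right _ _
      linarith [abs_nonneg (hb - l)]
    · calc ∫ s, H v s ∂ν ≤ ∫ _, |hb - l| ∂ν :=
            integral_mono (hHint1 v) (integrable_const _) fun s => le_of_abs_le (hHbd v s)
        _ ≤ |hb - l| := by
            rw [integral_const]
            simp [hν, Real.volume_Ioo]
  have hΨ_int : MeasureTheory.Integrable (fun v => ∫ s, H v s ∂ν) μ :=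
    A1.integrable_of_bdd hΨmono.measurable.aestronglyMeasurable |hb - l|
      (Filter.Eventually.of_forall hΨbd)
  have hutil : ∫ s in Set.Ioo (0:ℝ) 1, uPrice μ (r s) ≤ ∫ v, U v ∂μ := by
    calc ∫ s in Set.Ioo (0:ℝ) 1, uPrice μ (r s) = ∫ s, ∫ v, H v s ∂μ ∂ν := by
          rw [hν]
          exact (integral_congr_ae (Filter.Eventually.of_forall fun s => hinner s)).symm
      _ = ∫ v, ∫ s, H v s ∂ν ∂μ := hswap.symm
      _ ≤ ∫ v, U v ∂μ := integral_mono hΨ_int hU_int hpt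
  -- integrability of the price functionals along r
  have hS_int : MeasureTheory.Integrable (fun s => sPrice μ (r s)) ν := by
    refine A1.integrable_of_bdd ((B1.sPrice_cont hae hl hatom).measurable.comp
      (rfn_mono hlh).measurable).aestronglyMeasurable |∫ v, v ∂μ| ?_
    refine Filter.Eventually.of_forall fun s => ?_
    rw [abs_le]
    constructor
    · linarith [B1.sPrice_nonneg hae hl (r s), abs_nonneg (∫ v, v ∂μ)]
    · exact (B1.sPrice_le_E hae hl (r s)).trans (le_abs_self _)
  have hu_int : MeasureTheory.Integrable (fun s => uPrice μ (r s)) ν := by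
    refine A1.integrable_of_bdd ((A1.uPrice_cont hae hl).measurable.comp
      (rfn_mono hlh).measurable).aestronglyMeasurable |∫ v, v ∂μ| ?_
    refine Filter.Eventually.of_forall fun s => ?_
    rw [abs_le]
    constructor
    · linarith [A1.uPrice_nonneg (μ := μ) (r s), abs_nonneg (∫ v, v ∂μ)]
    · refine (A1.uPrice_le_E hae hl ?_).trans (le_abs_self _)
      exact hl.trans (rfn_mem (χ := χ) hlh s).1
  have hkey : ∫ s in Set.Ioo (0:ℝ) 1, (sPrice μ (r s) - lam * uPrice μ (r s)) ≤ M := by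
    calc ∫ s in Set.Ioo (0:ℝ) 1, (sPrice μ (r s) - lam * uPrice μ (r s))
        ≤ ∫ _ in Set.Ioo (0:ℝ) 1, M := by
          refine integral_mono (hS_int.sub (hu_int.const_mul lam)) (integrable_const M)
            fun s => hM (r s) (rfn_mem hlh s)
      _ = M := by simp [Real.volume_Ioo]
  calc ∫ v, v * x v ∂μ = ∫ s in Set.Ioo (0:ℝ) 1, sPrice μ (r s) := by rw [hsx, hsurp]
    _ = (∫ s in Set.Ioo (0:ℝ) 1, (sPrice μ (r s) - lam * uPrice μ (r s)))
        + lam * ∫ s in Set.Ioo (0:ℝ) 1, uPrice μ (r s) := by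
        rw [integral_sub hS_int (hu_int.const_mul lam), MeasureTheory.integral_const_mul]
        ring
    _ ≤ M + lam * ∫ v, U v ∂μ := by
        have := mul_le_mul_of_nonneg_left hutil hlam
        linarith
    _ = M + lam * ∫ v, (v * x v - p v) ∂μ := by rw [hux]

end F1

namespace G1
open Stmt13

variable {μ : Measure ℝ} {l hb : ℝ}

/-- Lagrangian objective -/
noncomputable def K (μ : Measure ℝ) (lam ρ : ℝ) : ℝ := sPrice μ ρ - lam * uPrice μ ρ

/-- max of the Lagrangian over prices -/
noncomputable def Mf (μ : Measure ℝ) (hb lam : ℝ) : ℝ := sSup ((K μ lam) '' Set.Icc 0 hb)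

variable [IsProbabilityMeasure μ]
variable (hae : ∀ᵐ v ∂μ, v ∈ Set.Icc l hb) (hl : 0 ≤ l) (hlh : l ≤ hb)
  (hatom : ∀ a : ℝ, μ {a} = 0)

include hae hl hlh hatom in
lemma K_cont (lam : ℝ) : Continuous (K μ lam) :=
  (B1.sPrice_cont hae hl hatom).sub (continuous_const.mul (A1.uPrice_cont hae hl))

include hl hlh in
lemma Icc_ne : (Set.Icc (0:ℝ) hb).Nonempty := ⟨0, le_rfl, hl.trans hlh⟩

include hae hl hlh hatom in
lemma exists_max (lam : ℝ) : ∃ ρ ∈ Set.Icc (0:ℝ) hb,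
    Mf μ hb lam = K μ lam ρ ∧ ∀ ρ' ∈ Set.Icc (0:ℝ) hb, K μ lam ρ' ≤ K μ lam ρ := by
  obtain ⟨ρ, hρ, hmax⟩ := isCompact_Icc.exists_isMaxOn (Icc_ne hl hlh)
    (K_cont hae hl hlh hatom lam).continuousOn
  refine ⟨ρ, hρ, ?_, fun ρ' hρ' => hmax hρ'⟩
  refine le_antisymm (csSup_le ((Icc_ne hl hlh).image _) ?_) (le_csSup ?_ ⟨ρ, hρ, rfl⟩)
  · rintro s ⟨ρ', hρ', rfl⟩
    exact hmax hρ'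
  · exact ⟨K μ lam ρ, by rintro s ⟨ρ', hρ', rfl⟩; exact hmax hρ'⟩

include hae hl hlh hatom in
lemma le_Mf (lam : ℝ) {ρ : ℝ} (hρ : ρ ∈ Set.Icc (0:ℝ) hb) : K μ lam ρ ≤ Mf μ hb lam := by
  obtain ⟨ρ₀, hρ₀, hM, hmax⟩ := exists_max hae hl hlh hatom lam
  rw [hM]
  exact hmax ρ hρ

include hae hl hlh hatom in
lemma le_Mf' (lam : ℝ) {ρ : ℝ} (hρ : ρ ∈ Set.Icc l hb) : K μ lam ρ ≤ Mf μ hb lam :=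
  le_Mf hae hl hlh hatom lam ⟨hl.trans hρ.1, hρ.2⟩

include hae hl in
lemma sPrice_zero_eq : sPrice μ 0 = ∫ v, v ∂μ := by
  refine integral_congr_ae ?_
  filter_upwards [hae] with v hv
  rw [if_pos (hl.trans hv.1)]

include hae hl hlh hatom in
lemma Mf_zero : Mf μ hb 0 = ∫ v, v ∂μ := by
  obtain ⟨ρ, hρ, hM, hmax⟩ := exists_max hae hl hlh hatom 0
  refine le_antisymm ?_ ?_
  · rw [hM, K, zero_mul, sub_zero]
    exact B1.sPrice_le_E hae hl ρ
  · have h0 : K μ 0 0 = ∫ v, v ∂μ := by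
      rw [K, zero_mul, sub_zero, sPrice_zero_eq hae hl]
    rw [← h0]
    exact le_Mf hae hl hlh hatom 0 ⟨le_rfl, hl.trans hlh⟩

include hae hl hlh hatom in
lemma Mf_lip (a b : ℝ) : Mf μ hb a ≤ Mf μ hb b + (∫ v, v ∂μ) * |a - b| := by
  obtain ⟨ρ, hρ, hM, _⟩ := exists_max hae hl hlh hatom a
  have h1 : K μ a ρ = K μ b ρ + (b - a) * uPrice μ ρ := by rw [K, K]; ring
  have h2 : (b - a) * uPrice μ ρ ≤ (∫ v, v ∂μ) * |a - b| := by
    have hu0 : 0 ≤ uPrice μ ρ := A1.uPrice_nonneg ρ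
    have huE : uPrice μ ρ ≤ ∫ v, v ∂μ := A1.uPrice_le_E hae hl hρ.1
    have hE0 : 0 ≤ ∫ v, v ∂μ := hu0.trans huE
    calc (b - a) * uPrice μ ρ ≤ |b - a| * uPrice μ ρ :=
          mul_le_mul_of_nonneg_right (le_abs_self _) hu0
      _ ≤ |b - a| * (∫ v, v ∂μ) := mul_le_mul_of_nonneg_left huE (abs_nonneg _)
      _ = (∫ v, v ∂μ) * |a - b| := by rw [abs_sub_comm]; ring
  calc Mf μ hb a = K μ a ρ := hM
    _ ≤ K μ b ρ + (∫ v, v ∂μ) * |a - b| := by rw [h1]; linarith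
    _ ≤ Mf μ hb b + (∫ v, v ∂μ) * |a - b| :=
        add_le_add_left (le_Mf hae hl hlh hatom b hρ) _

include hae hl hlh hatom in
lemma Mf_cont : Continuous (Mf μ hb) := by
  have hE0 : 0 ≤ ∫ v, v ∂μ :=
    (A1.uPrice_nonneg (μ := μ) 0).trans (A1.uPrice_le_E hae hl le_rfl)
  refine (LipschitzWith.of_dist_le_mul (K := (∫ v, v ∂μ).toNNReal) fun a b => ?_).continuous
  rw [Real.dist_eq, Real.dist_eq, Real.coe_toNNReal _ hE0, abs_le]
  constructor
  · have hba := Mf_lip hae hl hlh hatom b a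
    rw [abs_sub_comm b a] at hba
    linarith
  · linarith [Mf_lip hae hl hlh hatom a b]

include hae hatom in
lemma sPrice_hb_eq : sPrice μ hb = 0 :=
  B1.sPrice_of_ae_le hae hatom (by filter_upwards [hae] with v hv using hv.2)

include hae hl hlh hatom in
lemma Mf_nonneg (lam : ℝ) : 0 ≤ Mf μ hb lam := by
  have h : K μ lam hb = 0 := by
    rw [K, sPrice_hb_eq hae hatom, A1.uPrice_hb hae, mul_zero, sub_zero]
  rw [← h]
  exact le_Mf hae hl hlh hatom lam ⟨hl.trans hlh, le_rfl⟩

include hae hl hlh hatom in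
lemma exists_lamstar {c : ℝ} (hc : 0 < c) :
    ∃ lam : ℝ, 0 ≤ lam ∧ ∀ lam' ≥ (0:ℝ), Mf μ hb lam + lam * c ≤ Mf μ hb lam' + lam' * c := by
  set h : ℝ → ℝ := fun lam => Mf μ hb lam + lam * c with hh
  set Λ : ℝ := max 1 (Mf μ hb 0 / c + 1) with hΛ
  have hΛ0 : 0 ≤ Λ := le_trans zero_le_one (le_max_left _ _)
  have hcont : ContinuousOn h (Set.Icc 0 Λ) :=
    ((Mf_cont hae hl hlh hatom).add (continuous_id.mul continuous_const)).continuousOn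
  obtain ⟨lam, hlam, hmin⟩ := isCompact_Icc.exists_isMinOn ⟨0, le_rfl, hΛ0⟩ hcont
  refine ⟨lam, hlam.1, fun lam' hlam' => ?_⟩
  rcases le_or_gt lam' Λ with hle | hgt
  · exact hmin ⟨hlam', hle⟩
  · have h1 : h lam ≤ h 0 := hmin ⟨le_rfl, hΛ0⟩
    have h2 : h 0 = Mf μ hb 0 := by simp [hh]
    have h3 : Mf μ hb 0 + c ≤ Λ * c := by
      have : Mf μ hb 0 / c + 1 ≤ Λ := le_max_right _ _
      calc Mf μ hb 0 + c = (Mf μ hb 0 / c + 1) * c := by field_simp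
        _ ≤ Λ * c := mul_le_mul_of_nonneg_right this hc.le
    have h4 : Λ * c < lam' * c := mul_lt_mul_of_pos_right hgt hc
    have h5 : lam' * c ≤ h lam' := by
      have := Mf_nonneg hae hl hlh hatom lam'
      simp only [hh]
      linarith
    show h lam ≤ h lam'
    linarith

end G1

namespace G1
open Stmt13
variable {μ : Measure ℝ} {l hb : ℝ}
variable [IsProbabilityMeasure μ]
variable (hae : ∀ᵐ v ∂μ, v ∈ Set.Icc l hb) (hl : 0 ≤ l) (hlh : l ≤ hb)
  (hatom : ∀ a : ℝ, μ {a} = 0)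

include hae hl hlh hatom in
lemma select_r2 {c lam : ℝ} (hlam : 0 ≤ lam)
    (hmin : ∀ lam' ≥ (0:ℝ), Mf μ hb lam + lam * c ≤ Mf μ hb lam' + lam' * c) :
    ∃ r₂ ∈ Set.Icc (0:ℝ) hb, K μ lam r₂ = Mf μ hb lam ∧ uPrice μ r₂ ≤ c := by
  set lamn : ℕ → ℝ := fun n => lam + 1 / (n + 1) with hlamn
  have hlamn_pos : ∀ n : ℕ, 0 < (n:ℝ) + 1 := fun n => by positivity
  have hρ : ∀ n : ℕ, ∃ ρ ∈ Set.Icc (0:ℝ) hb, Mf μ hb (lamn n) = K μ (lamn n) ρ ∧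
      ∀ ρ' ∈ Set.Icc (0:ℝ) hb, K μ (lamn n) ρ' ≤ K μ (lamn n) ρ :=
    fun n => exists_max hae hl hlh hatom (lamn n)
  choose ρ hρmem hρeq _ using hρ
  have hun : ∀ n, uPrice μ (ρ n) ≤ c := by
    intro n
    have h1 : Mf μ hb lam + lam * c ≤ Mf μ hb (lamn n) + lamn n * c :=
      hmin (lamn n) (by positivity)
    have h2 : K μ (lamn n) (ρ n) = K μ lam (ρ n) - (1 / (n + 1)) * uPrice μ (ρ n) := by
      rw [K, K, hlamn]; ring
    have h3 : K μ lam (ρ n) ≤ Mf μ hb lam := le_Mf hae hl hlh hatom lam (hρmem n)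
    rw [hρeq n, h2] at h1
    have h4 : (1 / ((n:ℝ) + 1)) * c ≤ (1 / ((n:ℝ) + 1)) * uPrice μ (ρ n) → c ≤ uPrice μ (ρ n) :=
      fun h => le_of_mul_le_mul_left h (by positivity)
    -- h1 : M lam + lam c ≤ (K lam ρn - εn u ρn) + (lam + εn) c
    -- so εn * u ρn ≤ K lam ρn - M lam + εn c ≤ εn c
    have h5 : (1 / ((n:ℝ) + 1)) * uPrice μ (ρ n) ≤ (1 / ((n:ℝ) + 1)) * c := by
      have : lamn n * c = lam * c + (1 / ((n:ℝ) + 1)) * c := by rw [hlamn]; ring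
      rw [this] at h1
      linarith
    exact le_of_mul_le_mul_left h5 (by positivity)
  obtain ⟨r₂, hr₂mem, φ, hφ, hconv⟩ := isCompact_Icc.tendsto_subseq hρmem
  refine ⟨r₂, hr₂mem, ?_, ?_⟩
  · -- K lam r₂ = Mf lam
    refine le_antisymm (le_Mf hae hl hlh hatom lam hr₂mem) ?_
    have hlamconv : Filter.Tendsto (fun n => lamn (φ n)) Filter.atTop (nhds lam) := by
      have h1 : Filter.Tendsto (fun n : ℕ => 1 / ((n:ℝ) + 1)) Filter.atTop (nhds 0) :=
        tendsto_one_div_add_atTop_nhds_zero_nat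
      have h2 : Filter.Tendsto (fun n => 1 / ((φ n : ℝ) + 1)) Filter.atTop (nhds 0) :=
        h1.comp hφ.tendsto_atTop
      simpa [hlamn] using tendsto_const_nhds.add h2
    have hKconv : Filter.Tendsto (fun n => K μ (lamn (φ n)) (ρ (φ n))) Filter.atTop
        (nhds (K μ lam r₂)) := by
      have hS : Filter.Tendsto (fun n => sPrice μ (ρ (φ n))) Filter.atTop
          (nhds (sPrice μ r₂)) := ((B1.sPrice_cont hae hl hatom).tendsto r₂).comp hconv
      have hU : Filter.Tendsto (fun n => uPrice μ (ρ (φ n))) Filter.atTop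
          (nhds (uPrice μ r₂)) := ((A1.uPrice_cont hae hl).tendsto r₂).comp hconv
      exact hS.sub (hlamconv.mul hU)
    have hRconv : Filter.Tendsto (fun n => Mf μ hb lam + (lam - lamn (φ n)) * c)
        Filter.atTop (nhds (Mf μ hb lam)) := by
      have := ((tendsto_const_nhds (x := lam)).sub hlamconv).mul
        (tendsto_const_nhds (x := c))
      simpa using (tendsto_const_nhds (x := Mf μ hb lam)).add this
    refine le_of_tendsto_of_tendsto' hRconv hKconv fun n => ?_
    have h1 := hmin (lamn (φ n)) (by positivity)
    rw [hρeq (φ n)] at h1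
    linarith
  · exact le_of_tendsto (((A1.uPrice_cont hae hl).tendsto r₂).comp hconv)
      (Filter.Eventually.of_forall fun n => hun (φ n))

include hae hl hlh hatom in
lemma select_r1 {c lam : ℝ} (hlam : 0 ≤ lam) (hcE : c ≤ ∫ v, v ∂μ)
    (hmin : ∀ lam' ≥ (0:ℝ), Mf μ hb lam + lam * c ≤ Mf μ hb lam' + lam' * c) :
    ∃ r₁ ∈ Set.Icc (0:ℝ) hb, K μ lam r₁ = Mf μ hb lam ∧ c ≤ uPrice μ r₁ := by
  rcases eq_or_lt_of_le hlam with h0 | h0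
  · -- lam = 0 : take r₁ = 0
    refine ⟨0, ⟨le_rfl, hl.trans hlh⟩, ?_, ?_⟩
    · rw [← h0, K, zero_mul, sub_zero, Mf_zero hae hl hlh hatom,
        sPrice_zero_eq hae hl]
    · rw [A1.uPrice_zero hae hl]; exact hcE
  · -- lam > 0
    set lamn : ℕ → ℝ := fun n => lam - lam / (n + 1) with hlamn
    have hpos : ∀ n : ℕ, 0 < (n:ℝ) + 1 := fun n => by positivity
    have hlamn_mem : ∀ n, 0 ≤ lamn n := by
      intro n
      rw [hlamn]
      simp only
      rw [sub_nonneg, div_le_iff₀ (hpos n)]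
      nlinarith [hpos n]
    have hρ := fun n => exists_max hae hl hlh hatom (lamn n)
    choose ρ hρmem hρeq _ using hρ
    have hun : ∀ n, c ≤ uPrice μ (ρ n) := by
      intro n
      have h1 : Mf μ hb lam + lam * c ≤ Mf μ hb (lamn n) + lamn n * c :=
        hmin (lamn n) (hlamn_mem n)
      have h2 : K μ (lamn n) (ρ n) = K μ lam (ρ n) + (lam / (n + 1)) * uPrice μ (ρ n) := by
        rw [K, K, hlamn]; ring
      have h3 : K μ lam (ρ n) ≤ Mf μ hb lam := le_Mf hae hl hlh hatom lam (hρmem n)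
      rw [hρeq n, h2] at h1
      have h5 : (lam / ((n:ℝ) + 1)) * c ≤ (lam / ((n:ℝ) + 1)) * uPrice μ (ρ n) := by
        have : lamn n * c = lam * c - (lam / ((n:ℝ) + 1)) * c := by rw [hlamn]; ring
        rw [this] at h1
        linarith
      exact le_of_mul_le_mul_left h5 (by positivity)
    obtain ⟨r₁, hr₁mem, φ, hφ, hconv⟩ := isCompact_Icc.tendsto_subseq hρmem
    refine ⟨r₁, hr₁mem, ?_, ?_⟩
    · refine le_antisymm (le_Mf hae hl hlh hatom lam hr₁mem) ?_
      have hlamconv : Filter.Tendsto (fun n => lamn (φ n)) Filter.atTop (nhds lam) := by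
        have h1 : Filter.Tendsto (fun n : ℕ => lam / ((n:ℝ) + 1)) Filter.atTop (nhds 0) := by
          have h2 : Filter.Tendsto (fun n : ℕ => 1 / ((n:ℝ) + 1)) Filter.atTop (nhds 0) :=
            tendsto_one_div_add_atTop_nhds_zero_nat
          have := h2.const_mul lam
          simpa [div_eq_mul_inv, one_div] using this
        have h2 := h1.comp hφ.tendsto_atTop
        have h3 := (tendsto_const_nhds (x := lam)).sub h2
        simpa [hlamn] using h3
      have hKconv : Filter.Tendsto (fun n => K μ (lamn (φ n)) (ρ (φ n))) Filter.atTop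
          (nhds (K μ lam r₁)) := by
        have hS : Filter.Tendsto (fun n => sPrice μ (ρ (φ n))) Filter.atTop
            (nhds (sPrice μ r₁)) := ((B1.sPrice_cont hae hl hatom).tendsto r₁).comp hconv
        have hU : Filter.Tendsto (fun n => uPrice μ (ρ (φ n))) Filter.atTop
            (nhds (uPrice μ r₁)) := ((A1.uPrice_cont hae hl).tendsto r₁).comp hconv
        exact hS.sub (hlamconv.mul hU)
      have hRconv : Filter.Tendsto (fun n => Mf μ hb lam + (lam - lamn (φ n)) * c)
          Filter.atTop (nhds (Mf μ hb lam)) := by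
        have := ((tendsto_const_nhds (x := lam)).sub hlamconv).mul
          (tendsto_const_nhds (x := c))
        simpa using (tendsto_const_nhds (x := Mf μ hb lam)).add this
      refine le_of_tendsto_of_tendsto' hRconv hKconv fun n => ?_
      have h1 := hmin (lamn (φ n)) (hlamn_mem (φ n))
      rw [hρeq (φ n)] at h1
      linarith
    · exact ge_of_tendsto (((A1.uPrice_cont hae hl).tendsto r₁).comp hconv)
        (Filter.Eventually.of_forall fun n => hun (φ n))

end G1

namespace G1
open Stmt13
variable {μ : Measure ℝ} {l hb : ℝ}
variable [IsProbabilityMeasure μ]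
variable (hae : ∀ᵐ v ∂μ, v ∈ Set.Icc l hb) (hl : 0 ≤ l) (hlh : l ≤ hb)
  (hatom : ∀ a : ℝ, μ {a} = 0)

include hae hl hlh hatom in
lemma Mf_to_zero {ε : ℝ} (hε : 0 < ε) : ∃ lam : ℝ, 0 ≤ lam ∧ Mf μ hb lam < ε := by
  by_contra hcon
  push_neg at hcon
  have hcon' : ∀ n : ℕ, ε ≤ Mf μ hb ((n:ℝ) + 1) := fun n => hcon _ (by positivity)
  have hρ := fun n : ℕ => exists_max hae hl hlh hatom ((n:ℝ) + 1)
  choose ρ hρmem hρeq _ using hρ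
  set E := ∫ v, v ∂μ with hE
  have hSle : ∀ n, sPrice μ (ρ n) ≤ E := fun n => B1.sPrice_le_E hae hl (ρ n)
  have hub : ∀ n : ℕ, uPrice μ (ρ n) ≤ (E - ε) * (1 / ((n:ℝ) + 1)) := by
    intro n
    have h1 : ε ≤ K μ ((n:ℝ) + 1) (ρ n) := (hcon' n).trans_eq (hρeq n)
    rw [K] at h1
    have h2 : ((n:ℝ) + 1) * uPrice μ (ρ n) ≤ E - ε := by linarith [hSle n]
    have h3 : (0:ℝ) < (n:ℝ) + 1 := by positivity
    rw [mul_one_div, le_div_iff₀ h3]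
    linarith [h2]
  obtain ⟨rb, hrbmem, φ, hφ, hconv⟩ := isCompact_Icc.tendsto_subseq hρmem
  -- uPrice μ rb = 0
  have huconv : Filter.Tendsto (fun n => uPrice μ (ρ (φ n))) Filter.atTop
      (nhds (uPrice μ rb)) := ((A1.uPrice_cont hae hl).tendsto rb).comp hconv
  have hbound : Filter.Tendsto (fun n : ℕ => (E - ε) * (1 / ((φ n : ℝ) + 1)))
      Filter.atTop (nhds 0) := by
    have h1 : Filter.Tendsto (fun n : ℕ => 1 / ((n:ℝ) + 1)) Filter.atTop (nhds 0) :=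
      tendsto_one_div_add_atTop_nhds_zero_nat
    have h2 := (h1.comp hφ.tendsto_atTop).const_mul (E - ε)
    simpa using h2
  have hu0 : uPrice μ rb = 0 := by
    refine le_antisymm ?_ (A1.uPrice_nonneg rb)
    have h1 : uPrice μ rb ≤ 0 :=
      le_of_tendsto_of_tendsto' huconv hbound fun n => hub (φ n)
    exact h1
  have hS0 : sPrice μ rb = 0 := B1.sPrice_zero_of_uPrice_zero hae hl hatom hu0
  -- but sPrice μ rb ≥ ε
  have hSge : ∀ n, ε ≤ sPrice μ (ρ n) := by
    intro n
    have h1 : ε ≤ K μ ((n:ℝ) + 1) (ρ n) := (hcon' n).trans_eq (hρeq n)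
    rw [K] at h1
    have h2 : 0 ≤ uPrice μ (ρ n) := A1.uPrice_nonneg _
    nlinarith [h2, (by positivity : (0:ℝ) < (n:ℝ) + 1)]
  have hSconv : Filter.Tendsto (fun n => sPrice μ (ρ (φ n))) Filter.atTop
      (nhds (sPrice μ rb)) := ((B1.sPrice_cont hae hl hatom).tendsto rb).comp hconv
  have : ε ≤ sPrice μ rb :=
    ge_of_tendsto hSconv (Filter.Eventually.of_forall fun n => hSge (φ n))
  linarith [hS0 ▸ this]

end G1

namespace H1
open Stmt13 D1

variable {μ : Measure ℝ} {l hb : ℝ}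
variable [IsProbabilityMeasure μ]
variable (hae : ∀ᵐ v ∂μ, v ∈ Set.Icc l hb) (hl : 0 ≤ l) (hlh : l ≤ hb)
  (hatom : ∀ a : ℝ, μ {a} = 0)

include hae hl hlh in
lemma feas_surplus_int {c : ℝ} {x p : ℝ → ℝ} (hf : Feas μ l hb c x p) :
    Integrable (fun v => v * x v) μ := by
  obtain ⟨hx, hIC, hIR, _⟩ := hf
  have hχm : Monotone (fun v => x (clamp l hb v)) := chi_mono hlh hIC
  have hint : Integrable (fun v => v * x (clamp l hb v)) μ := by
    refine A1.integrable_of_bdd (measurable_id.mul hχm.measurable).aestronglyMeasurable |hb| ?_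
    filter_upwards [A1.ae_abs_le hae hl] with v hv
    calc |v * x (clamp l hb v)| = |v| * |x (clamp l hb v)| := abs_mul _ _
      _ ≤ |hb| * 1 := by
          refine mul_le_mul hv ?_ (abs_nonneg _) (abs_nonneg _)
          rw [abs_le]
          exact ⟨by linarith [(hx (clamp l hb v)).1], (hx (clamp l hb v)).2⟩
      _ = |hb| := mul_one _
  refine hint.congr ?_
  filter_upwards [hae] with v hv
  rw [clamp_eq hv]

include hae hl hlh in
lemma feas_utility_int {c : ℝ} {x p : ℝ → ℝ} (hf : Feas μ l hb c x p) :
    Integrable (fun v => v * x v - p v) μ := by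
  obtain ⟨hx, hIC, hIR, _⟩ := hf
  set U : ℝ → ℝ := fun v => clamp l hb v * x (clamp l hb v) - p (clamp l hb v) with hU
  have hUm : Monotone U := U_mono hlh hx hIC
  have hUv : ∀ v, U v = U (clamp l hb v) := by
    intro v
    simp only [hU, clamp_eq (clamp_mem hlh v)]
  have hUbd : ∀ v, |U v| ≤ |U l| + |U hb| := by
    intro v
    have h1 : U l ≤ U v := by rw [hUv v]; exact hUm (clamp_mem hlh v).1
    have h2 : U v ≤ U hb := by rw [hUv v]; exact hUm (clamp_mem hlh v).2
    rw [abs_le]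
    constructor
    · linarith [neg_abs_le (U l), abs_nonneg (U hb)]
    · linarith [le_abs_self (U hb), abs_nonneg (U l)]
  have hU_int : Integrable U μ :=
    A1.integrable_of_bdd hUm.measurable.aestronglyMeasurable (|U l| + |U hb|)
      (Filter.Eventually.of_forall hUbd)
  refine hU_int.congr ?_
  filter_upwards [hae] with v hv
  simp only [hU, clamp_eq hv]

include hae hl hlh in
lemma surplus_le_E {c : ℝ} {x p : ℝ → ℝ} (hf : Feas μ l hb c x p) :
    ∫ v, v * x v ∂μ ≤ ∫ v, v ∂μ := by
  refine integral_mono_ae (feas_surplus_int hae hl hlh hf) (A1.integrable_id' hae hl) ?_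
  filter_upwards [hae] with v hv
  have h0 : 0 ≤ v := hl.trans hv.1
  have h1 := (hf.1 v).2
  nlinarith

include hae hl hlh in
lemma gSet_bddAbove (c : ℝ) :
    BddAbove {s : ℝ | ∃ x p : ℝ → ℝ, Feas μ l hb c x p ∧ s = ∫ v, v * x v ∂μ} := by
  refine ⟨∫ v, v ∂μ, ?_⟩
  rintro s ⟨x, p, hf, rfl⟩
  exact surplus_le_E hae hl hlh hf

include hae hl hlh hatom in
lemma main_two_price {c : ℝ} (hc0 : 0 ≤ c) (hcE : c < ∫ v, v ∂μ) :
    ∃ q₁ q₂ α : ℝ, q₁ ≤ q₂ ∧ α ∈ Set.Icc (0:ℝ) 1 ∧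
      q₁ ∈ Set.Icc (0:ℝ) hb ∧ q₂ ∈ Set.Icc (0:ℝ) hb ∧
      α * uPrice μ q₁ + (1 - α) * uPrice μ q₂ = c ∧
      (∀ x p : ℝ → ℝ, Feas μ l hb c x p →
        ∫ v, v * x v ∂μ ≤ α * sPrice μ q₁ + (1 - α) * sPrice μ q₂) := by
  have hbnn : (0:ℝ) ≤ hb := hl.trans hlh
  rcases eq_or_lt_of_le hc0 with hc | hc
  · -- c = 0
    refine ⟨hb, hb, 1, le_rfl, ⟨zero_le_one, le_rfl⟩, ⟨hbnn, le_rfl⟩, ⟨hbnn, le_rfl⟩, ?_, ?_⟩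
    · rw [A1.uPrice_hb hae, ← hc]; ring
    · intro x p hf
      rw [G1.sPrice_hb_eq hae hatom]
      have hle : ∀ ε : ℝ, 0 < ε → ∫ v, v * x v ∂μ ≤ ε := by
        intro ε hε
        obtain ⟨lam, hlam, hMlt⟩ := G1.Mf_to_zero hae hl hlh hatom hε
        have hcore := F1.core hae hl hlh hatom hf.1 hf.2.1 hf.2.2.1 lam hlam
          (G1.Mf μ hb lam) (fun ρ hρ => G1.le_Mf' hae hl hlh hatom lam hρ)
        have hu : ∫ v, (v * x v - p v) ∂μ ≤ 0 := hf.2.2.2.trans_eq hc.symm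
        nlinarith [hcore, mul_nonneg hlam (neg_nonneg.mpr hu)]
      have : ∫ v, v * x v ∂μ ≤ 0 := by
        by_contra hcon
        push_neg at hcon
        linarith [hle ((∫ v, v * x v ∂μ) / 2) (by linarith)]
      linarith
  · -- 0 < c
    obtain ⟨lam, hlam, hmin⟩ := G1.exists_lamstar hae hl hlh hatom hc
    obtain ⟨r₁, hr₁mem, hK₁, hu₁⟩ := G1.select_r1 hae hl hlh hatom hlam hcE.le hmin
    obtain ⟨r₂, hr₂mem, hK₂, hu₂⟩ := G1.select_r2 hae hl hlh hatom hlam hmin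
    have hS₁ : sPrice μ r₁ = G1.Mf μ hb lam + lam * uPrice μ r₁ := by
      have := hK₁; rw [G1.K] at this; linarith
    have hS₂ : sPrice μ r₂ = G1.Mf μ hb lam + lam * uPrice μ r₂ := by
      have := hK₂; rw [G1.K] at this; linarith
    have hupper : ∀ x p : ℝ → ℝ, Feas μ l hb c x p →
        ∫ v, v * x v ∂μ ≤ G1.Mf μ hb lam + lam * c := by
      intro x p hf
      have hcore := F1.core hae hl hlh hatom hf.1 hf.2.1 hf.2.2.1 lam hlam
        (G1.Mf μ hb lam) (fun ρ hρ => G1.le_Mf' hae hl hlh hatom lam hρ)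
      have hu : ∫ v, (v * x v - p v) ∂μ ≤ c := hf.2.2.2
      nlinarith [mul_le_mul_of_nonneg_left hu hlam]
    by_cases heq : uPrice μ r₁ = uPrice μ r₂
    · have hceq : uPrice μ r₁ = c := le_antisymm (heq ▸ hu₂) hu₁
      refine ⟨r₁, r₁, 1, le_rfl, ⟨zero_le_one, le_rfl⟩, hr₁mem, hr₁mem, ?_, ?_⟩
      · rw [hceq]; ring
      · intro x p hf
        have := hupper x p hf
        rw [hS₁, hceq]
        calc ∫ v, v * x v ∂μ ≤ G1.Mf μ hb lam + lam * c := this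
          _ = 1 * (G1.Mf μ hb lam + lam * c) + (1 - 1) * (G1.Mf μ hb lam + lam * c) := by ring
    · have hord : uPrice μ r₂ < uPrice μ r₁ :=
        lt_of_le_of_ne (hu₂.trans hu₁) (Ne.symm heq)
      have hr12 : r₁ < r₂ := by
        by_contra hcon
        push_neg at hcon
        have := A1.uPrice_anti hcon (A1.integrable_maxsub hae hl r₂)
          (A1.integrable_maxsub hae hl r₁)
        linarith
      set α : ℝ := (c - uPrice μ r₂) / (uPrice μ r₁ - uPrice μ r₂) with hα
      have hαden : 0 < uPrice μ r₁ - uPrice μ r₂ := by linarith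
      have hα0 : 0 ≤ α := div_nonneg (by linarith) hαden.le
      have hα1 : α ≤ 1 := by
        rw [hα, div_le_one hαden]
        linarith
      have hcombo : α * uPrice μ r₁ + (1 - α) * uPrice μ r₂ = c := by
        rw [hα]
        field_simp
        ring
      refine ⟨r₁, r₂, α, hr12.le, ⟨hα0, hα1⟩, hr₁mem, hr₂mem, hcombo, ?_⟩
      intro x p hf
      have h1 := hupper x p hf
      have h2 : α * sPrice μ r₁ + (1 - α) * sPrice μ r₂
          = G1.Mf μ hb lam + lam * c := by
        rw [hS₁, hS₂, ← hcombo]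
        ring
      linarith

end H1


open Stmt13 in
/-- **Lemma A.1** (structure of utility-constrained surplus maximization). -/
theorem stmt_13 (l hb : ℝ) (hl : 0 ≤ l) (hlh : l ≤ hb)
    (f : ℝ → ℝ) (hf : ∀ v, 0 ≤ f v) (hfsupp : ∀ v, v ∉ Set.Icc l hb → f v = 0)
    (μ : Measure ℝ)
    (hμ : μ = MeasureTheory.volume.withDensity (fun v => ENNReal.ofReal (f v)))
    (hprob : IsProbabilityMeasure μ) :
    -- (i) for `c ≥ E[v]`, full allocation at zero payment is optimal
    (∀ c : ℝ, (∫ v, v ∂μ) ≤ c →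
      gVal μ l hb c = ∫ v, v ∂μ ∧
      Feas μ l hb c (fun _ => 1) (fun _ => 0) ∧
      (∫ v, v * (1 : ℝ) ∂μ) = gVal μ l hb c)
    -- (ii) for `0 ≤ c < E[v]`, a randomization over two posted prices with
    -- expected utility exactly `c` is optimal
    ∧ (∀ c : ℝ, 0 ≤ c → c < ∫ v, v ∂μ →
      ∃ p₁ p₂ α : ℝ, p₁ ≤ p₂ ∧ α ∈ Set.Icc (0 : ℝ) 1 ∧
        Feas μ l hb c (stepX p₁ p₂ α) (stepP p₁ p₂ α) ∧
        (∫ v, (v * stepX p₁ p₂ α v - stepP p₁ p₂ α v) ∂μ) = c ∧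
        (∫ v, v * stepX p₁ p₂ α v ∂μ) = gVal μ l hb c)
    -- (ii') if `S_U` is concave, a single posted price is optimal
    ∧ (∀ pr : ℝ → ℝ,
        (∀ c ∈ Set.Icc 0 (∫ v, v ∂μ), uPrice μ (pr c) = c) →
        ConcaveOn ℝ (Set.Icc 0 (∫ v, v ∂μ)) (fun c => sPrice μ (pr c)) →
        ∀ c : ℝ, 0 ≤ c → c < ∫ v, v ∂μ →
        ∃ ρ : ℝ,
          Feas μ l hb c (stepX ρ ρ 1) (stepP ρ ρ 1) ∧
          (∫ v, (v * stepX ρ ρ 1 v - stepP ρ ρ 1 v) ∂μ) = c ∧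
          (∫ v, v * stepX ρ ρ 1 v ∂μ) = gVal μ l hb c)
    -- (iii) in either case the bound can be attained with equality
    ∧ (∀ c : ℝ, 0 ≤ c →
      ∃ x p : ℝ → ℝ, Feas μ l hb c x p ∧
        (∫ v, (v * x v - p v) ∂μ) = c ∧ (∫ v, v * x v ∂μ) = gVal μ l hb c)
    -- (iv) `g` is concave on `[0, ∞)`
    ∧ ConcaveOn ℝ (Set.Ici (0 : ℝ)) (gVal μ l hb) := by
  -- basic measure facts
  have hac : μ ≪ MeasureTheory.volume := hμ ▸ withDensity_absolutelyContinuous _ _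
  have hatom : ∀ a : ℝ, μ {a} = 0 := fun a => hac (Real.volume_singleton)
  have hae : ∀ᵐ v ∂μ, v ∈ Set.Icc l hb := by
    rw [MeasureTheory.ae_iff]
    have he : {v : ℝ | ¬ v ∈ Set.Icc l hb} = (Set.Icc l hb)ᶜ := rfl
    rw [he, hμ, withDensity_apply _ measurableSet_Icc.compl]
    calc ∫⁻ v in (Set.Icc l hb)ᶜ, ENNReal.ofReal (f v)
        = ∫⁻ v in (Set.Icc l hb)ᶜ, 0 := by
          refine setLIntegral_congr_fun_ae measurableSet_Icc.compl
            (MeasureTheory.ae_of_all _ fun v hv => ?_)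
          rw [hfsupp v hv, ENNReal.ofReal_zero]
      _ = 0 := MeasureTheory.lintegral_zero
  have hE0 : 0 ≤ ∫ v, v ∂μ := by
    refine integral_nonneg_of_ae ?_
    filter_upwards [hae] with v hv using hl.trans hv.1
  -- part (i)
  have hfeas_one : ∀ c : ℝ, (∫ v, v ∂μ) ≤ c → Feas μ l hb c (fun _ => 1) (fun _ => 0) := by
    intro c hcE
    refine ⟨fun _ => ⟨zero_le_one, le_rfl⟩, fun v _ v' _ => le_rfl,
      fun v hv => by simpa using hl.trans hv.1, ?_⟩
    have he : (fun v : ℝ => v * (1:ℝ) - 0) = fun v : ℝ => v := by funext v; ring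
    calc ∫ v, (v * (1:ℝ) - 0) ∂μ = ∫ v, v ∂μ := by rw [he]
      _ ≤ c := hcE
  have hmemE : ∀ c : ℝ, (∫ v, v ∂μ) ≤ c →
      (∫ v, v ∂μ) ∈ {s : ℝ | ∃ x p : ℝ → ℝ, Feas μ l hb c x p ∧ s = ∫ v, v * x v ∂μ} := by
    intro c hcE
    exact ⟨fun _ => 1, fun _ => 0, hfeas_one c hcE, by simp⟩
  have hival : ∀ c : ℝ, (∫ v, v ∂μ) ≤ c → gVal μ l hb c = ∫ v, v ∂μ := by
    intro c hcE
    refine le_antisymm (csSup_le ⟨_, hmemE c hcE⟩ ?_)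
      (le_csSup (H1.gSet_bddAbove hae hl hlh c) (hmemE c hcE))
    rintro s ⟨x, p, hfs, rfl⟩
    exact H1.surplus_le_E hae hl hlh hfs
  have parti : ∀ c : ℝ, (∫ v, v ∂μ) ≤ c →
      gVal μ l hb c = ∫ v, v ∂μ ∧
      Feas μ l hb c (fun _ => 1) (fun _ => 0) ∧
      (∫ v, v * (1 : ℝ) ∂μ) = gVal μ l hb c := by
    intro c hcE
    refine ⟨hival c hcE, hfeas_one c hcE, ?_⟩
    rw [hival c hcE]
    simp
  -- part (ii)
  have partii : ∀ c : ℝ, 0 ≤ c → c < ∫ v, v ∂μ →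
      ∃ p₁ p₂ α : ℝ, p₁ ≤ p₂ ∧ α ∈ Set.Icc (0 : ℝ) 1 ∧
        Feas μ l hb c (stepX p₁ p₂ α) (stepP p₁ p₂ α) ∧
        (∫ v, (v * stepX p₁ p₂ α v - stepP p₁ p₂ α v) ∂μ) = c ∧
        (∫ v, v * stepX p₁ p₂ α v ∂μ) = gVal μ l hb c := by
    intro c hc0 hcE
    obtain ⟨q₁, q₂, α, hq, hα, hq₁, hq₂, hcombo, hub⟩ :=
      H1.main_two_price hae hl hlh hatom hc0 hcE
    have hfeas : Feas μ l hb c (stepX q₁ q₂ α) (stepP q₁ q₂ α) := by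
      refine ⟨C1.stepX_mem hα, fun v _ v' _ => C1.step_IC hq hα v v',
        fun v _ => C1.step_IR hq hα v, ?_⟩
      rw [C1.step_utility hae hl hq, hcombo]
    have hsurp : ∫ v, v * stepX q₁ q₂ α v ∂μ
        = α * sPrice μ q₁ + (1 - α) * sPrice μ q₂ := C1.step_surplus hae hl hq
    have hmem : (α * sPrice μ q₁ + (1 - α) * sPrice μ q₂)
        ∈ {s : ℝ | ∃ x p : ℝ → ℝ, Feas μ l hb c x p ∧ s = ∫ v, v * x v ∂μ} :=
      ⟨stepX q₁ q₂ α, stepP q₁ q₂ α, hfeas, hsurp.symm⟩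
    have hval : gVal μ l hb c = α * sPrice μ q₁ + (1 - α) * sPrice μ q₂ := by
      refine le_antisymm (csSup_le ⟨_, hmem⟩ ?_)
        (le_csSup (H1.gSet_bddAbove hae hl hlh c) hmem)
      rintro s ⟨x, p, hfs, rfl⟩
      exact hub x p hfs
    refine ⟨q₁, q₂, α, hq, hα, hfeas, ?_, ?_⟩
    · rw [C1.step_utility hae hl hq]; exact hcombo
    · rw [hsurp, hval]
  -- part (ii')
  have partii' : ∀ pr : ℝ → ℝ,
      (∀ c ∈ Set.Icc 0 (∫ v, v ∂μ), uPrice μ (pr c) = c) →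
      ConcaveOn ℝ (Set.Icc 0 (∫ v, v ∂μ)) (fun c => sPrice μ (pr c)) →
      ∀ c : ℝ, 0 ≤ c → c < ∫ v, v ∂μ →
      ∃ ρ : ℝ,
        Feas μ l hb c (stepX ρ ρ 1) (stepP ρ ρ 1) ∧
        (∫ v, (v * stepX ρ ρ 1 v - stepP ρ ρ 1 v) ∂μ) = c ∧
        (∫ v, v * stepX ρ ρ 1 v ∂μ) = gVal μ l hb c := by
    intro pr hpr hconc c hc0 hcE
    obtain ⟨q₁, q₂, α, hq, hα, hq₁, hq₂, hcombo, hub⟩ :=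
      H1.main_two_price hae hl hlh hatom hc0 hcE
    have humem : ∀ q : ℝ, q ∈ Set.Icc (0:ℝ) hb →
        uPrice μ q ∈ Set.Icc 0 (∫ v, v ∂μ) :=
      fun q hqm => ⟨A1.uPrice_nonneg q, A1.uPrice_le_E hae hl hqm.1⟩
    have hSle : ∀ q : ℝ, q ∈ Set.Icc (0:ℝ) hb →
        sPrice μ q ≤ sPrice μ (pr (uPrice μ q)) := by
      intro q hqm
      rcases eq_or_lt_of_le (A1.uPrice_nonneg (μ := μ) q) with hz | hz
      · rw [B1.sPrice_zero_of_uPrice_zero hae hl hatom hz.symm]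
        exact B1.sPrice_nonneg hae hl _
      · have hpq : uPrice μ (pr (uPrice μ q)) = uPrice μ q := hpr _ (humem q hqm)
        have hqeq : pr (uPrice μ q) = q := by
          by_contra hne
          rcases lt_or_gt_of_ne hne with hlt | hgt
          · have h0 := B1.uPrice_inj hae hl hlt hpq
            rw [hpq] at h0
            linarith
          · have h0 := B1.uPrice_inj hae hl hgt hpq.symm
            linarith
        rw [hqeq]
    have hccmem : c ∈ Set.Icc 0 (∫ v, v ∂μ) := ⟨hc0, hcE.le⟩
    have hconcave : α * sPrice μ (pr (uPrice μ q₁)) + (1 - α) * sPrice μ (pr (uPrice μ q₂))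
        ≤ sPrice μ (pr (α * uPrice μ q₁ + (1 - α) * uPrice μ q₂)) := by
      have h := hconc.2 (humem q₁ hq₁) (humem q₂ hq₂) hα.1
        (show (0:ℝ) ≤ 1 - α by linarith [hα.2]) (show α + (1 - α) = 1 by ring)
      simpa [smul_eq_mul] using h
    rw [hcombo] at hconcave
    have hkey : α * sPrice μ q₁ + (1 - α) * sPrice μ q₂ ≤ sPrice μ (pr c) := by
      have h1 : α * sPrice μ q₁ ≤ α * sPrice μ (pr (uPrice μ q₁)) :=
        mul_le_mul_of_nonneg_left (hSle q₁ hq₁) hα.1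
      have h2 : (1 - α) * sPrice μ q₂ ≤ (1 - α) * sPrice μ (pr (uPrice μ q₂)) :=
        mul_le_mul_of_nonneg_left (hSle q₂ hq₂) (by linarith [hα.2])
      linarith
    set ρ := pr c with hρ
    have h1mem : (1:ℝ) ∈ Set.Icc (0:ℝ) 1 := ⟨zero_le_one, le_rfl⟩
    have hufeq : uPrice μ ρ = c := hpr c hccmem
    have hfeas : Feas μ l hb c (stepX ρ ρ 1) (stepP ρ ρ 1) := by
      refine ⟨C1.stepX_mem h1mem, fun v _ v' _ => C1.step_IC le_rfl h1mem v v',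
        fun v _ => C1.step_IR le_rfl h1mem v, ?_⟩
      rw [C1.step_utility hae hl le_rfl, hufeq]
      linarith
    have hsurp : ∫ v, v * stepX ρ ρ 1 v ∂μ = sPrice μ ρ := by
      rw [C1.step_surplus hae hl le_rfl]; ring
    have hmem : sPrice μ ρ
        ∈ {s : ℝ | ∃ x p : ℝ → ℝ, Feas μ l hb c x p ∧ s = ∫ v, v * x v ∂μ} :=
      ⟨stepX ρ ρ 1, stepP ρ ρ 1, hfeas, hsurp.symm⟩
    have hval : gVal μ l hb c = sPrice μ ρ := by
      refine le_antisymm (csSup_le ⟨_, hmem⟩ ?_)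
        (le_csSup (H1.gSet_bddAbove hae hl hlh c) hmem)
      rintro s ⟨x, p, hfs, rfl⟩
      exact (hub x p hfs).trans hkey
    refine ⟨ρ, hfeas, ?_, ?_⟩
    · rw [C1.step_utility hae hl le_rfl, hufeq]; ring
    · rw [hsurp, hval]
  -- part (iii)
  have partiii : ∀ c : ℝ, 0 ≤ c →
      ∃ x p : ℝ → ℝ, Feas μ l hb c x p ∧
        (∫ v, (v * x v - p v) ∂μ) = c ∧ (∫ v, v * x v ∂μ) = gVal μ l hb c := by
    intro c hc0
    rcases lt_or_ge c (∫ v, v ∂μ) with hcE | hcE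
    · obtain ⟨p₁, p₂, α, _, _, hfeas, hut, hsur⟩ := partii c hc0 hcE
      exact ⟨stepX p₁ p₂ α, stepP p₁ p₂ α, hfeas, hut, hsur⟩
    · refine ⟨fun _ => 1, fun _ => (∫ v, v ∂μ) - c, ?_, ?_, ?_⟩
      · refine ⟨fun _ => ⟨zero_le_one, le_rfl⟩, fun v _ v' _ => le_rfl, ?_, ?_⟩
        · intro v hv
          have : 0 ≤ v := hl.trans hv.1
          simp only [mul_one]
          linarith
        · have he : (fun v : ℝ => v * (1:ℝ) - ((∫ w, w ∂μ) - c))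
              = fun v : ℝ => v - ((∫ w, w ∂μ) - c) := by funext v; ring
          rw [he, integral_sub (A1.integrable_id' hae hl) (integrable_const _),
            integral_const]
          simp
      · have he : (fun v : ℝ => v * (1:ℝ) - ((∫ w, w ∂μ) - c))
            = fun v : ℝ => v - ((∫ w, w ∂μ) - c) := by funext v; ring
        rw [he, integral_sub (A1.integrable_id' hae hl) (integrable_const _),
          integral_const]
        simp
      · rw [hival c hcE]
        simp
  -- part (iv)
  have partiv : ConcaveOn ℝ (Set.Ici (0 : ℝ)) (gVal μ l hb) := by
    refine ⟨convex_Ici 0, ?_⟩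
    intro c₁ h₁ c₂ h₂ a b ha hb' hab
    obtain ⟨x₁, p₁, hf₁, hu₁, hs₁⟩ := partiii c₁ h₁
    obtain ⟨x₂, p₂, hf₂, hu₂, hs₂⟩ := partiii c₂ h₂
    set X : ℝ → ℝ := fun v => a * x₁ v + b * x₂ v with hX
    set P : ℝ → ℝ := fun v => a * p₁ v + b * p₂ v with hP
    have hfeas : Feas μ l hb (a * c₁ + b * c₂) X P := by
      refine ⟨?_, ?_, ?_, ?_⟩
      · intro v
        constructor
        · have := (hf₁.1 v).1; have := (hf₂.1 v).1
          positivity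
        · have h1 := (hf₁.1 v).2; have h2 := (hf₂.1 v).2
          calc a * x₁ v + b * x₂ v ≤ a * 1 + b * 1 :=
              add_le_add (mul_le_mul_of_nonneg_left h1 ha)
                (mul_le_mul_of_nonneg_left h2 hb')
            _ = 1 := by rw [mul_one, mul_one]; exact hab
      · intro v hv v' hv'
        have e1 : v * X v' - P v' = a * (v * x₁ v' - p₁ v') + b * (v * x₂ v' - p₂ v') := by
          simp only [hX, hP]; ring
        have e2 : v * X v - P v = a * (v * x₁ v - p₁ v) + b * (v * x₂ v - p₂ v) := by
          simp only [hX, hP]; ring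
        rw [e1, e2]
        exact add_le_add (mul_le_mul_of_nonneg_left (hf₁.2.1 v hv v' hv') ha)
          (mul_le_mul_of_nonneg_left (hf₂.2.1 v hv v' hv') hb')
      · intro v hv
        have e2 : v * X v - P v = a * (v * x₁ v - p₁ v) + b * (v * x₂ v - p₂ v) := by
          simp only [hX, hP]; ring
        rw [e2]
        have h1 := hf₁.2.2.1 v hv
        have h2 := hf₂.2.2.1 v hv
        positivity
      · have he : (fun v => v * X v - P v)
            = fun v => a * (v * x₁ v - p₁ v) + b * (v * x₂ v - p₂ v) := by
          funext v; simp only [hX, hP]; ring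
        rw [he, integral_add ((H1.feas_utility_int hae hl hlh hf₁).const_mul a)
          ((H1.feas_utility_int hae hl hlh hf₂).const_mul b),
          MeasureTheory.integral_const_mul, MeasureTheory.integral_const_mul, hu₁, hu₂]
    have hsurp : ∫ v, v * X v ∂μ = a * gVal μ l hb c₁ + b * gVal μ l hb c₂ := by
      have he : (fun v => v * X v) = fun v => a * (v * x₁ v) + b * (v * x₂ v) := by
        funext v; simp only [hX]; ring
      rw [he, integral_add ((H1.feas_surplus_int hae hl hlh hf₁).const_mul a)
        ((H1.feas_surplus_int hae hl hlh hf₂).const_mul b),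
        MeasureTheory.integral_const_mul, MeasureTheory.integral_const_mul, hs₁, hs₂]
    have hmem : (a * gVal μ l hb c₁ + b * gVal μ l hb c₂)
        ∈ {s : ℝ | ∃ x p : ℝ → ℝ, Feas μ l hb (a * c₁ + b * c₂) x p
            ∧ s = ∫ v, v * x v ∂μ} := ⟨X, P, hfeas, hsurp.symm⟩
    have hle := le_csSup (H1.gSet_bddAbove hae hl hlh (a * c₁ + b * c₂)) hmem
    rw [smul_eq_mul, smul_eq_mul, smul_eq_mul, smul_eq_mul]
    exact hle
  exact ⟨parti, partii, partii', partiii, partiv⟩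
end

section
/- The sequential-contract mechanism for truncated equal revenue distributions (Example 1.1): Let n ≥ 1, let v_1 be drawn from the equal revenue distribution truncated at n and v_2 independently from the equal revenue distribution truncated at e^n. Consider the two-period mechanism: in period 1 the buyer reports b, receives item 1 with probability 1 and pays b, and receives a contract to get item 2 for free with probability b/(n+1); i.e., x_1(b) = 1, p_1(b) = b, x_2(b, v_2) = b/(n+1), p_2(b, v_2) = 0. Then (i) E[v_2] = n + 1, so truthful reporting in period 1 gives the buyer total expected utility v_1 regardless of the report, and the mechanism is periodic incentive compatible (truthful reporting is weakly dominant) and ex-post individually rational; (ii) its expected revenue is E[v_1] = 1 + ln n; and (iii) for each of the two distributions, the optimal revenue of a single-period IC, IR mechanism is 1, so running two such mechanisms in sequence yields revenue at most 2. -/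
/-!
Example 1.1 (the sequential-contract mechanism for truncated equal revenue
distributions): with `v₁` from the equal revenue distribution truncated at `n`
and `v₂` from the one truncated at `e^n`, the two-period mechanism
`x₁(b) = 1, p₁(b) = b, x₂(b, v₂) = b/(n+1), p₂ = 0` gives every report the
same total expected utility `v₁` (so truth-telling is optimal), is periodic
incentive compatible and ex-post individually rational, and earns expected
revenue `E[v₁] = 1 + ln n`; whereas any single-period IC, IR mechanism earns
at most `1` on either distribution (and `1` is attained by posting the price
`1`), so two sequential single-period mechanisms earn at most `2`.
-/

open MeasureTheory Set Filter Topology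
open scoped ENNReal NNReal

namespace Stmt18

/-- The equal revenue distribution truncated at `T`: density `1/v²` on
`[1, T)` and an atom of mass `1/T` at `T`. -/
noncomputable def truncER (T : ℝ) : Measure ℝ :=
  MeasureTheory.volume.withDensity
      (fun v => ENNReal.ofReal (if 1 ≤ v ∧ v < T then 1 / v ^ 2 else 0))
    + (ENNReal.ofReal (1 / T)) • Measure.dirac T

/-- Feasibility of a single-period mechanism on a distribution supported on
`[1, T]`: allocation probabilities, incentive compatibility, and individual
rationality. -/
def Feas (T : ℝ) (x p : ℝ → ℝ) : Prop :=
  (∀ v, x v ∈ Set.Icc (0 : ℝ) 1) ∧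
  (∀ v ∈ Set.Icc 1 T, ∀ v' ∈ Set.Icc 1 T, v * x v' - p v' ≤ v * x v - p v) ∧
  (∀ v ∈ Set.Icc 1 T, 0 ≤ v * x v - p v)

end Stmt18


namespace Stmt18Aux
open Stmt18

/-- The real density of `truncER`. -/
noncomputable def g (T : ℝ) : ℝ → ℝ := fun v => if 1 ≤ v ∧ v < T then 1 / v ^ 2 else 0

lemma g_nonneg (T v : ℝ) : 0 ≤ g T v := by
  unfold g; split <;> positivity

lemma g_meas (T : ℝ) : Measurable (g T) := by
  unfold g
  have : {v : ℝ | 1 ≤ v ∧ v < T} = Set.Ico 1 T := rfl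
  exact Measurable.ite (this ▸ measurableSet_Ico) (by measurability) measurable_const

lemma integral_truncER {T : ℝ} (hT : 0 < T) (f : ℝ → ℝ)
    (hf : Integrable ((Set.Ico (1:ℝ) T).indicator (fun v => f v / v^2))) :
    ∫ v, f v ∂(truncER T) = (∫ v in Set.Ico (1:ℝ) T, f v / v^2) + (1/T) * f T := by
  have hkey : ∀ v, (g T v).toNNReal • f v
      = (Set.Ico (1:ℝ) T).indicator (fun v => f v / v^2) v := by
    intro v
    simp only [NNReal.smul_def, Real.coe_toNNReal _ (g_nonneg T v), smul_eq_mul]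
    by_cases h : v ∈ Set.Ico (1:ℝ) T
    · rw [Set.indicator_of_mem h]
      have : (1 ≤ v ∧ v < T) := ⟨h.1, h.2⟩
      simp [g, this]; ring
    · rw [Set.indicator_of_notMem h]
      have : ¬ (1 ≤ v ∧ v < T) := fun hc => h ⟨hc.1, hc.2⟩
      simp [g, this]
  have hdens : (fun v => ENNReal.ofReal (if 1 ≤ v ∧ v < T then 1 / v ^ 2 else 0))
      = fun v => ((g T v).toNNReal : ℝ≥0∞) := rfl
  have hm : Measurable (fun v => (g T v).toNNReal) := (g_meas T).real_toNNReal
  have hint1 : Integrable f (MeasureTheory.volume.withDensity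
      (fun v => ENNReal.ofReal (if 1 ≤ v ∧ v < T then 1 / v ^ 2 else 0))) := by
    rw [hdens, integrable_withDensity_iff_integrable_smul hm]
    exact hf.congr (by filter_upwards with v using (hkey v).symm)
  have hint2 : Integrable f ((ENNReal.ofReal (1 / T)) • Measure.dirac T) := by
    refine Integrable.smul_measure ?_ ENNReal.ofReal_ne_top
    exact (integrable_const (f T)).congr (ae_eq_dirac f).symm
  rw [truncER, integral_add_measure hint1 hint2]
  congr 1
  · rw [hdens, integral_withDensity_eq_integral_smul hm]
    rw [show (fun v => (g T v).toNNReal • f v)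
        = (Set.Ico (1:ℝ) T).indicator (fun v => f v / v^2) from funext hkey]
    exact integral_indicator measurableSet_Ico
  · rw [integral_smul_measure, integral_dirac, smul_eq_mul,
      ENNReal.toReal_ofReal (by positivity)]

lemma int_Ico_one_div_sq {T : ℝ} (hT : 1 ≤ T) :
    (∫ v in Set.Ico (1:ℝ) T, 1 / v^2) = 1 - 1/T := by
  rw [integral_Ico_eq_integral_Ioo, ← integral_Ioc_eq_integral_Ioo,
    ← intervalIntegral.integral_of_le hT]
  have h0 : (0:ℝ) ∉ Set.uIcc 1 T := by
    rw [Set.uIcc_of_le hT]; intro h; exact absurd h.1 (by norm_num)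
  have : ∀ v : ℝ, 1 / v^2 = v ^ (-2 : ℤ) := by
    intro v; rw [zpow_neg, one_div]; congr 1
  rw [intervalIntegral.integral_congr (g := fun v : ℝ => v ^ (-2:ℤ)) (fun v _ => this v)]
  rw [integral_zpow (Or.inr ⟨by norm_num, h0⟩)]
  norm_num
  ring

lemma int_Ico_inv {T : ℝ} (hT : 1 ≤ T) :
    (∫ v in Set.Ico (1:ℝ) T, v / v^2) = Real.log T := by
  rw [integral_Ico_eq_integral_Ioo, ← integral_Ioc_eq_integral_Ioo,
    ← intervalIntegral.integral_of_le hT]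
  have h0 : (0:ℝ) ∉ Set.uIcc 1 T := by
    rw [Set.uIcc_of_le hT]; intro h; exact absurd h.1 (by norm_num)
  have heq : Set.EqOn (fun v : ℝ => v / v^2) (fun v : ℝ => 1 / v) (Set.uIcc 1 T) := by
    intro v hv
    rw [Set.uIcc_of_le hT] at hv
    have : v ≠ 0 := by have := hv.1; intro h; simp [h] at this; linarith
    field_simp
  rw [intervalIntegral.integral_congr heq, integral_one_div h0, div_one]

lemma integrable_ind {T : ℝ} (hT : 1 ≤ T) (f : ℝ → ℝ)
    (hf : IntegrableOn (fun v => f v / v^2) (Set.Ico 1 T)) :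
    Integrable ((Set.Ico (1:ℝ) T).indicator (fun v => f v / v^2)) :=
  (integrable_indicator_iff measurableSet_Ico).2 hf

lemma int_one_truncER {T : ℝ} (hT : 1 ≤ T) : (∫ v, (1:ℝ) ∂(truncER T)) = 1 := by
  have hT0 : 0 < T := lt_of_lt_of_le one_pos hT
  have hco : ContinuousOn (fun v : ℝ => (1:ℝ) / v^2) (Set.Icc 1 T) := by
    apply ContinuousOn.div continuousOn_const (by fun_prop)
    intro v hv; have := hv.1; positivity
  have : (∫ v, (1:ℝ) ∂(truncER T))
      = (∫ v in Set.Ico (1:ℝ) T, 1 / v^2) + (1/T) * 1 := by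
    exact integral_truncER hT0 (fun _ => 1)
      (integrable_ind hT _ ((hco.integrableOn_compact isCompact_Icc).mono_set
        Set.Ico_subset_Icc_self))
  rw [this, int_Ico_one_div_sq hT]
  field_simp
  ring

lemma int_id_truncER {T : ℝ} (hT : 1 ≤ T) : (∫ v, v ∂(truncER T)) = Real.log T + 1 := by
  have hT0 : 0 < T := lt_of_lt_of_le one_pos hT
  have hco : ContinuousOn (fun v : ℝ => v / v^2) (Set.Icc 1 T) := by
    apply ContinuousOn.div continuousOn_id (by fun_prop)
    intro v hv; have := hv.1; positivity
  have : (∫ v, v ∂(truncER T))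
      = (∫ v in Set.Ico (1:ℝ) T, v / v^2) + (1/T) * T := by
    exact integral_truncER hT0 (fun v => v)
      (integrable_ind hT _ ((hco.integrableOn_compact isCompact_Icc).mono_set
        Set.Ico_subset_Icc_self))
  rw [this, int_Ico_inv hT]
  field_simp


noncomputable def cl (T v : ℝ) : ℝ := max 1 (min v T)

lemma cl_mem {T : ℝ} (hT : 1 ≤ T) (v : ℝ) : cl T v ∈ Set.Icc (1:ℝ) T :=
  ⟨le_max_left _ _, max_le hT (min_le_right _ _)⟩

lemma cl_eq {T v : ℝ} (hv : v ∈ Set.Icc (1:ℝ) T) : cl T v = v := by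
  unfold cl; rw [min_eq_left hv.2, max_eq_right hv.1]

lemma cl_mono (T : ℝ) : Monotone (cl T) :=
  fun _ _ h => max_le_max le_rfl (min_le_min h le_rfl)


lemma rev_le_one {T : ℝ} (hT : 1 ≤ T) {x p : ℝ → ℝ} (hF : Feas T x p) :
    (∫ v, p v ∂(truncER T)) ≤ 1 := by
  obtain ⟨hx01, hIC, hIR⟩ := hF
  suffices h : (∫ v in Set.Ico (1:ℝ) T, p v / v^2) + (1/T) * p T ≤ 1 ∧
      Integrable ((Set.Ico (1:ℝ) T).indicator (fun v => p v / v^2)) volume by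
    rw [integral_truncER (lt_of_lt_of_le one_pos hT) p h.2]
    exact h.1

  have hT0 : (0:ℝ) < T := lt_of_lt_of_le one_pos hT
  set u : ℝ → ℝ := fun v => v * x v - p v with hu_def
  have hIC' : ∀ a ∈ Set.Icc (1:ℝ) T, ∀ b ∈ Set.Icc (1:ℝ) T,
      u a + (b - a) * x a ≤ u b := by
    intro a ha b hb
    have h1 := hIC b hb a ha
    have h2 : a * x a - p a + (b - a) * x a = b * x a - p a := by ring
    simp only [hu_def]
    linarith
  set X : ℝ → ℝ := fun v => x (cl T v) with hX_def
  have hXeq : ∀ v ∈ Set.Icc (1:ℝ) T, X v = x v := fun v hv => by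
    simp only [hX_def, cl_eq hv]
  have hX0 : ∀ v, 0 ≤ X v := fun v => (hx01 _).1
  have hX1 : ∀ v, X v ≤ 1 := fun v => (hx01 _).2
  have hxmono : MonotoneOn x (Set.Icc (1:ℝ) T) := by
    intro a ha b hb hab
    rcases hab.lt_or_eq with h | h
    · nlinarith [hIC' a ha b hb, hIC' b hb a ha]
    · rw [h]
  have hXmono : Monotone X := fun a b hab =>
    hxmono (cl_mem hT a) (cl_mem hT b) (cl_mono T hab)
  have hkeylip : ∀ a ∈ Set.Icc (1:ℝ) T, ∀ b ∈ Set.Icc (1:ℝ) T, a ≤ b →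
      |u b - u a| ≤ b - a := by
    intro a ha b hb hab
    rw [abs_le]
    constructor
    · nlinarith [hIC' a ha b hb, (hx01 a).1]
    · nlinarith [hIC' b hb a ha, (hx01 b).2]
  have hu_cont : ContinuousOn u (Set.Icc (1:ℝ) T) := by
    apply LipschitzOnWith.continuousOn (K := 1)
    apply LipschitzOnWith.of_dist_le_mul
    intro a ha b hb
    rw [Real.dist_eq, Real.dist_eq, NNReal.coe_one, one_mul]
    rcases le_total a b with h | h
    · rw [abs_sub_comm (u a), abs_sub_comm a b]
      exact le_trans (hkeylip a ha b hb h) (le_abs_self _)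
    · exact le_trans (hkeylip b hb a ha h) (le_abs_self _)
  set L : ℝ → ℝ := fun v => sInf (X '' Set.Ioi v) with hL_def
  have hne : ∀ v : ℝ, (X '' Set.Ioi v).Nonempty :=
    fun v => ⟨X (v+1), ⟨v+1, by simp, rfl⟩⟩
  have hbdd : ∀ v : ℝ, BddBelow (X '' Set.Ioi v) :=
    fun v => ⟨0, fun y ⟨w, _, hw⟩ => hw ▸ hX0 w⟩
  have hXleL : ∀ v, X v ≤ L v := fun v =>
    le_csInf (hne v) (fun y ⟨w, hw, he⟩ => he ▸ hXmono (le_of_lt hw))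
  have hLleX : ∀ v w, v < w → L v ≤ X w := fun v w hw =>
    csInf_le (hbdd v) ⟨w, hw, rfl⟩
  have hXtend : ∀ v : ℝ, Tendsto X (𝓝[>] v) (𝓝 (L v)) :=
    fun v => hXmono.tendsto_nhdsGT v
  -- right derivative of u
  have hu_deriv : ∀ v ∈ Set.Ioo (1:ℝ) T, HasDerivWithinAt u (L v) (Set.Ioi v) v := by
    intro v hv
    have hvI : v ∈ Set.Icc (1:ℝ) T := ⟨le_of_lt hv.1, le_of_lt hv.2⟩
    rw [hasDerivWithinAt_iff_tendsto_slope]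
    rw [Set.diff_singleton_eq_self (by simp : v ∉ Set.Ioi v)]
    apply tendsto_of_tendsto_of_tendsto_of_le_of_le' tendsto_const_nhds (hXtend v)
    · filter_upwards [Ioo_mem_nhdsGT_of_mem (⟨le_refl v, hv.2⟩ : v ∈ Set.Ico v T)]
        with w hw
      have hwI : w ∈ Set.Icc (1:ℝ) T := ⟨by linarith [hv.1, hw.1], le_of_lt hw.2⟩
      rw [slope_def_field, le_div_iff₀ (by linarith [hw.1] : (0:ℝ) < w - v)]
      have hstep : (w - v) * L v ≤ u w - u v := by
        have ht : Tendsto (fun w' : ℝ => (w - w') * L v) (𝓝[>] v) (𝓝 ((w - v) * L v)) :=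
          (((continuous_const.sub continuous_id).mul continuous_const).tendsto v).mono_left
            nhdsWithin_le_nhds
        refine le_of_tendsto ht ?_
        · filter_upwards [Ioo_mem_nhdsGT_of_mem
            (⟨le_refl v, hw.1⟩ : v ∈ Set.Ico v w)] with w' hw'
          have hw'I : w' ∈ Set.Icc (1:ℝ) T :=
            ⟨by linarith [hv.1, hw'.1], by linarith [hw'.2, hw.2]⟩
          have h1 := hIC' w' hw'I w hwI
          have h2 := hIC' v hvI w' hw'I
          have h3 : L v ≤ x w' := by rw [← hXeq w' hw'I]; exact hLleX v w' hw'.1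
          have h4 : (w - w') * L v ≤ (w - w') * x w' :=
            mul_le_mul_of_nonneg_left h3 (by linarith [hw'.2])
          nlinarith [(hx01 v).1, hw'.1]
      nlinarith [hstep]
    · filter_upwards [Ioo_mem_nhdsGT_of_mem (⟨le_refl v, hv.2⟩ : v ∈ Set.Ico v T)]
        with w hw
      have hwI : w ∈ Set.Icc (1:ℝ) T := ⟨by linarith [hv.1, hw.1], le_of_lt hw.2⟩
      have h2 : X w = x w := hXeq w hwI
      rw [slope_def_field, h2, div_le_iff₀ (by linarith [hw.1] : (0:ℝ) < w - v)]
      have h1 := hIC' w hwI v hvI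
      nlinarith
  -- FTC inequality for u v / v
  set φ : ℝ → ℝ := fun v => (v * X v - u v) / v^2 with hφ_def
  have hφint : IntegrableOn φ (Set.Icc (1:ℝ) T) := by
    have h1 : IntegrableOn (fun v => v * X v / v^2) (Set.Icc (1:ℝ) T) := by
      have hm : AEStronglyMeasurable (fun v => v * X v / v^2)
          (volume.restrict (Set.Icc (1:ℝ) T)) :=
        ((measurable_id.mul hXmono.measurable).div
          (measurable_id.pow_const 2)).aestronglyMeasurable
      apply Integrable.mono' ((integrableOn_const_iff (C := (1:ℝ))).2 (Or.inr measure_Icc_lt_top)) hm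
      filter_upwards [ae_restrict_mem measurableSet_Icc] with v hv
      have h1v : (1:ℝ) ≤ v := hv.1
      rw [Real.norm_eq_abs, abs_div, abs_of_nonneg (by nlinarith [hX0 v] : (0:ℝ) ≤ v * X v),
        abs_of_nonneg (by positivity : (0:ℝ) ≤ v^2), div_le_one (by positivity)]
      nlinarith [hX1 v, hX0 v]
    have h2 : IntegrableOn (fun v => u v / v^2) (Set.Icc (1:ℝ) T) := by
      apply ContinuousOn.integrableOn_compact isCompact_Icc
      apply hu_cont.div ((continuous_pow 2).continuousOn)
      intro v hv
      have := hv.1; positivity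
    have heq : φ = fun v => v * X v / v^2 - u v / v^2 := funext fun v => sub_div _ _ _
    rw [heq]; exact h1.sub h2
  have hmain : (∫ v in (1:ℝ)..T, φ v) ≤ u T / T - u 1 / 1 := by
    apply intervalIntegral.integral_le_sub_of_hasDeriv_right_of_le hT
      (g := fun v => u v / v) (g' := fun v => (L v * v - u v * 1) / v^2)
    · apply hu_cont.div continuousOn_id
      intro v hv
      have h1 : (1:ℝ) ≤ v := hv.1
      intro h; have h0 : v = 0 := h; rw [h0] at h1; linarith
    · intro v hv
      refine (hu_deriv v hv).div (hasDerivWithinAt_id v _) ?_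
      have h1 : (1:ℝ) < v := hv.1
      intro h; have h0 : v = 0 := h; rw [h0] at h1; linarith
    · exact hφint
    · intro v hv
      have hv0 : (0:ℝ) < v^2 := by have := hv.1; positivity
      have hnum : v * X v - u v ≤ L v * v - u v * 1 := by
        nlinarith [mul_le_mul_of_nonneg_left (hXleL v)
          (le_of_lt (lt_trans one_pos hv.1))]
      exact (div_le_div_iff_of_pos_right hv0).2 hnum
  -- assemble
  have hEqOn : Set.EqOn φ (fun v => p v / v^2) (Set.Ico (1:ℝ) T) := by
    intro v hv
    have hvI : v ∈ Set.Icc (1:ℝ) T := Set.Ico_subset_Icc_self hv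
    simp only [hφ_def, hXeq v hvI, hu_def]
    ring_nf
  have heq2 : (∫ v in Set.Ico (1:ℝ) T, p v / v^2) = ∫ v in (1:ℝ)..T, φ v := by
    rw [← setIntegral_congr_fun measurableSet_Ico hEqOn,
      integral_Ico_eq_integral_Ioo, ← integral_Ioc_eq_integral_Ioo,
      ← intervalIntegral.integral_of_le hT]
  have hu1 : 0 ≤ u 1 := by
    have := hIR 1 ⟨le_refl 1, hT⟩
    simpa [hu_def] using this
  have hpT : p T = T * x T - u T := by rw [hu_def]; ring
  have hxT : x T ≤ 1 := (hx01 T).2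
  constructor
  · rw [heq2, hpT]
    have h5 : (1/T) * (T * x T - u T) = x T - u T / T := by field_simp
    rw [h5]
    have hfinal : u T / T - u 1 / 1 + (x T - u T / T) ≤ 1 := by
      rw [div_one]
      have heq : u T / T - u 1 + (x T - u T / T) = x T - u 1 := by ring
      rw [heq]; linarith
    linarith [hmain, hfinal]
  · exact (integrable_indicator_iff measurableSet_Ico).2
      ((hφint.mono_set Set.Ico_subset_Icc_self).congr_fun hEqOn measurableSet_Ico)

end Stmt18Aux

open Stmt18 in
/-- **Example 1.1** (the sequential-contract mechanism beats any sequence of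
single-period mechanisms on truncated equal revenue distributions). -/
theorem stmt_18 (n : ℝ) (hn : 1 ≤ n) :
    -- (i) `E[v₂] = n + 1` …
    (∫ v, v ∂(truncER (Real.exp n))) = n + 1
    -- … hence every report `b` yields total expected utility `v₁`
    ∧ (∀ v₁ b : ℝ,
        (v₁ * 1 - b) + (b / (n + 1)) * (∫ v, v ∂(truncER (Real.exp n))) = v₁)
    -- first-period periodic incentive compatibility (truthfulness is optimal)
    ∧ (∀ v₁ ∈ Set.Icc 1 n, ∀ b ∈ Set.Icc 1 n,
        (v₁ * 1 - b) + (b / (n + 1)) * (∫ v, v ∂(truncER (Real.exp n)))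
          ≤ (v₁ * 1 - v₁) + (v₁ / (n + 1)) * (∫ v, v ∂(truncER (Real.exp n))))
    -- second-period incentive compatibility (the report is not used)
    ∧ (∀ b : ℝ, ∀ v₂ ∈ Set.Icc 1 (Real.exp n), ∀ v₂' ∈ Set.Icc 1 (Real.exp n),
        v₂ * (b / (n + 1)) - 0 ≤ v₂ * (b / (n + 1)) - 0)
    -- ex-post individual rationality of both stages under truthful reporting
    ∧ (∀ v₁ ∈ Set.Icc 1 n, 0 ≤ v₁ * 1 - v₁)
    ∧ (∀ v₁ ∈ Set.Icc 1 n, ∀ v₂ ∈ Set.Icc 1 (Real.exp n),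
        0 ≤ v₂ * (v₁ / (n + 1)) - 0)
    -- (ii) the expected revenue of the mechanism is `E[v₁] = 1 + ln n`
    ∧ (∫ v, (v + 0) ∂(truncER n)) = 1 + Real.log n
    -- (iii) every single-period IC, IR mechanism earns at most `1` on either
    -- distribution, and posting the price `1` earns exactly `1`
    ∧ (∀ x p : ℝ → ℝ, Feas n x p → (∫ v, p v ∂(truncER n)) ≤ 1)
    ∧ (∀ x p : ℝ → ℝ, Feas (Real.exp n) x p →
        (∫ v, p v ∂(truncER (Real.exp n))) ≤ 1)
    ∧ Feas n (fun _ => 1) (fun _ => 1)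
    ∧ Feas (Real.exp n) (fun _ => 1) (fun _ => 1)
    ∧ (∫ v, (1 : ℝ) ∂(truncER n)) = 1
    ∧ (∫ v, (1 : ℝ) ∂(truncER (Real.exp n))) = 1
    -- hence two sequential single-period mechanisms earn at most `2`
    ∧ (∀ x p x' p' : ℝ → ℝ, Feas n x p → Feas (Real.exp n) x' p' →
        (∫ v, p v ∂(truncER n)) + (∫ v, p' v ∂(truncER (Real.exp n))) ≤ 2) := by
  classical
  have hen : (1:ℝ) ≤ Real.exp n := by linarith [Real.add_one_le_exp n]
  have hn1 : n + 1 ≠ 0 := by linarith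
  have h1 : (∫ v, v ∂(truncER (Real.exp n))) = n + 1 := by
    rw [Stmt18Aux.int_id_truncER hen, Real.log_exp]
  have h2 : ∀ v₁ b : ℝ,
      (v₁ * 1 - b) + (b / (n + 1)) * (∫ v, v ∂(truncER (Real.exp n))) = v₁ := by
    intro v₁ b
    rw [h1, div_mul_cancel₀ _ hn1]
    try ring
  refine ⟨h1, h2, ?_, ?_, ?_, ?_, ?_, ?_, ?_, ?_, ?_, ?_, ?_, ?_⟩
  · intro v₁ _ b _
    rw [h2 v₁ b, h2 v₁ v₁]
  · intro b v₂ _ v₂' _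
    exact le_refl _
  · intro v₁ _
    simp
  · intro v₁ hv₁ v₂ hv₂
    rw [sub_zero]
    exact mul_nonneg (by linarith [hv₂.1]) (div_nonneg (by linarith [hv₁.1]) (by linarith))
  · simp only [add_zero]
    rw [Stmt18Aux.int_id_truncER hn]; ring
  · intro x p hF
    exact Stmt18Aux.rev_le_one hn hF
  · intro x p hF
    exact Stmt18Aux.rev_le_one hen hF
  · exact ⟨fun v => ⟨zero_le_one, le_refl 1⟩, fun v _ v' _ => le_refl _,
      fun v hv => by simpa using hv.1⟩
  · exact ⟨fun v => ⟨zero_le_one, le_refl 1⟩, fun v _ v' _ => le_refl _,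
      fun v hv => by simpa using hv.1⟩
  · exact Stmt18Aux.int_one_truncER hn
  · exact Stmt18Aux.int_one_truncER hen
  · intro x p x' p' hF hF'
    linarith [Stmt18Aux.rev_le_one hn hF, Stmt18Aux.rev_le_one hen hF']
end

section
/- Surplus-utility tradeoff for the equal revenue distribution (Example 3.2): Let v be drawn from the equal revenue distribution (density 1/v² on [1, ∞)), and let the tradeoff function be g(u) = −u + h(u) for u ≥ 0 and g(u) = −∞ for u < 0, where h : [0, ∞) → [0, ∞) is differentiable with 0 ≤ h'(u) ≤ 1 for all u ≥ 0. Then the supremum (in the extended reals) over IC mechanisms (x, p) of E_v[v x(v) + g(v x(v) − p(v))] equals E_v[h(v − 1)] + 1, and it is attained by posting the price 1, i.e., by x ≡ 1 and p ≡ 1. -/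
/-!
Example 3.2 (surplus-utility tradeoff for the equal revenue distribution): for
the equal revenue distribution (density `1/v²` on `[1, ∞)`) and the tradeoff
function `g(u) = -u + h(u)` for `u ≥ 0` (`-∞` for `u < 0`), where
`h : [0,∞) → [0,∞)` is differentiable with `0 ≤ h' ≤ 1`, the supremum (in the
extended reals) of `E[v x(v) + g(v x(v) - p(v))]` over IC mechanisms equals
`E[h(v - 1)] + 1`, and it is attained by posting the price `1`.
-/

open MeasureTheory
open scoped ENNReal

namespace Stmt19

/-- The positive part of an extended real, as an extended non-negative real. -/
noncomputable def epos (a : EReal) : ℝ≥0∞ :=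
  if a = ⊤ then ⊤ else ENNReal.ofReal a.toReal

/-- Signed integral of an extended-real-valued function: `⊥` whenever the
negative part has infinite integral (in particular whenever the function takes
the value `⊥` on a set of positive measure), and the difference of the
integrals of the positive and negative parts otherwise (possibly `⊤`). -/
noncomputable def eInt (μ : Measure ℝ) (φ : ℝ → EReal) : EReal :=
  if (∫⁻ v, epos (-(φ v)) ∂μ) = ⊤ then ⊥
  else ((∫⁻ v, epos (φ v) ∂μ : ℝ≥0∞) : EReal)
      - (((∫⁻ v, epos (-(φ v)) ∂μ).toReal : ℝ) : EReal)

/-- The equal revenue distribution: density `1/v²` on `[1, ∞)`. -/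
noncomputable def equalRev : Measure ℝ :=
  MeasureTheory.volume.withDensity
    (fun v => ENNReal.ofReal (if 1 ≤ v then 1 / v ^ 2 else 0))

/-- The tradeoff function `g(u) = -u + h(u)` for `u ≥ 0`, `-∞` for `u < 0`. -/
noncomputable def gTrade (h : ℝ → ℝ) (u : ℝ) : EReal :=
  if 0 ≤ u then (((-u + h u : ℝ)) : EReal) else ⊥

/-- The surplus-utility-tradeoff objective `E[v x(v) + g(v x(v) - p(v))]`. -/
noncomputable def obj (h : ℝ → ℝ) (x p : ℝ → ℝ) : EReal :=
  eInt equalRev (fun v => ((v * x v : ℝ) : EReal) + gTrade h (v * x v - p v))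

/-- Feasibility: allocation probabilities and IC on the support `[1, ∞)`. -/
def Feas (x p : ℝ → ℝ) : Prop :=
  (∀ v, x v ∈ Set.Icc (0 : ℝ) 1) ∧
  (∀ v ∈ Set.Ici (1 : ℝ), ∀ v' ∈ Set.Ici (1 : ℝ), v * x v' - p v' ≤ v * x v - p v)

end Stmt19

open MeasureTheory Set intervalIntegral Stmt19

namespace Stmt19X
open Stmt19

noncomputable def dens (v : ℝ) : ℝ≥0∞ := ENNReal.ofReal (if 1 ≤ v then 1 / v ^ 2 else 0)

lemma meas_dens : Measurable dens := by
  apply ENNReal.measurable_ofReal.comp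
  apply Measurable.ite measurableSet_Ici ?_ measurable_const
  exact (measurable_id.pow_const 2).const_div 1

lemma dens_lt (v : ℝ) (hv : ¬ (1 ≤ v)) : dens v = 0 := by
  simp [dens, hv]

lemma dens_ge (v : ℝ) (hv : 1 ≤ v) : dens v = ENNReal.ofReal (1 / v ^ 2) := by
  simp [dens, hv]

lemma dens_pos (v : ℝ) (hv : 1 ≤ v) : dens v ≠ 0 := by
  rw [dens_ge v hv]
  simp only [ne_eq, ENNReal.ofReal_eq_zero, not_le]
  positivity

lemma lint_er (f : ℝ → ℝ≥0∞) :
    ∫⁻ v, f v ∂equalRev = ∫⁻ v, dens v * f v := by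
  have : equalRev = MeasureTheory.volume.withDensity dens := rfl
  rw [this, lintegral_withDensity_eq_lintegral_mul_non_measurable _ meas_dens
    (ae_of_all _ fun v => ENNReal.ofReal_lt_top) f]
  rfl

lemma epos_coe (r : ℝ) : epos ((r : ℝ) : EReal) = ENNReal.ofReal r := by
  simp [epos]

lemma epos_neg_coe (r : ℝ) : epos (-((r : ℝ) : EReal)) = ENNReal.ofReal (-r) := by
  rw [← EReal.coe_neg, epos_coe]

lemma epos_bot : epos ⊥ = 0 := by simp [epos]

lemma epos_top : epos ⊤ = ⊤ := by simp [epos]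

lemma epos_neg_bot : epos (-(⊥ : EReal)) = ⊤ := by
  rw [EReal.neg_bot, epos_top]

-- integral of 1/v^2 on Ioi 1
lemma integrable_inv_sq : IntegrableOn (fun v : ℝ => 1 / v ^ 2) (Ioi 1) := by
  have h1 : ∀ x ∈ Ioi (1:ℝ), HasDerivAt (fun v : ℝ => -v⁻¹) (1 / x ^ 2) x := by
    intro x hx
    have hx0 : x ≠ 0 := by simp only [mem_Ioi] at hx; linarith
    simpa [one_div] using (hasDerivAt_inv hx0).fun_neg
  have h2 : Filter.Tendsto (fun v : ℝ => -v⁻¹) Filter.atTop (nhds 0) := by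
    have := (tendsto_inv_atTop_zero (𝕜 := ℝ)).neg
    simpa using this
  have hc : ContinuousWithinAt (fun v : ℝ => -v⁻¹) (Ici 1) 1 :=
    ((continuousAt_inv₀ one_ne_zero).neg).continuousWithinAt
  exact integrableOn_Ioi_deriv_of_nonneg hc h1
    (fun x hx => by positivity) h2

lemma integral_inv_sq : ∫ v in Ioi (1:ℝ), 1 / v ^ 2 = 1 := by
  have h1 : ∀ x ∈ Ioi (1:ℝ), HasDerivAt (fun v : ℝ => -v⁻¹) (1 / x ^ 2) x := by
    intro x hx
    have hx0 : x ≠ 0 := by simp only [mem_Ioi] at hx; linarith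
    simpa [one_div] using (hasDerivAt_inv hx0).fun_neg
  have h2 : Filter.Tendsto (fun v : ℝ => -v⁻¹) Filter.atTop (nhds 0) := by
    have := (tendsto_inv_atTop_zero (𝕜 := ℝ)).neg
    simpa using this
  have hc : ContinuousWithinAt (fun v : ℝ => -v⁻¹) (Ici 1) 1 :=
    ((continuousAt_inv₀ one_ne_zero).neg).continuousWithinAt
  have := integral_Ioi_of_hasDerivAt_of_nonneg hc h1
    (fun x hx => by positivity) h2
  simpa using this

lemma mass : ∫⁻ v, dens v = 1 := by
  have h1 : dens = (Ici (1:ℝ)).indicator (fun v => ENNReal.ofReal (1 / v ^ 2)) := by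
    funext v
    by_cases hv : 1 ≤ v
    · rw [dens_ge v hv]; exact (indicator_of_mem (show v ∈ Ici 1 from hv) (fun v => ENNReal.ofReal (1 / v ^ 2))).symm
    · rw [dens_lt v hv]; exact (indicator_of_notMem (show v ∉ Ici 1 from hv) (fun v => ENNReal.ofReal (1 / v ^ 2))).symm
  rw [h1, lintegral_indicator measurableSet_Ici _,
    setLIntegral_congr (Filter.EventuallyEq.symm Ioi_ae_eq_Ici),
    ← ofReal_integral_eq_lintegral_ofReal integrable_inv_sq
      (ae_of_all _ fun v => by positivity), integral_inv_sq, ENNReal.ofReal_one]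

end Stmt19X
open MeasureTheory Set
open scoped ENNReal

section Hfacts
variable {h h' : ℝ → ℝ}
    (hderiv : ∀ u ∈ Set.Ici (0 : ℝ), HasDerivWithinAt h (h' u) (Set.Ici 0) u)
    (hslope : ∀ u ∈ Set.Ici (0 : ℝ), h' u ∈ Set.Icc (0 : ℝ) 1)

include hderiv hslope

lemma h_cont : ContinuousOn h (Ici 0) := fun u hu => (hderiv u hu).continuousWithinAt

lemma h_diff : DifferentiableOn ℝ h (interior (Ici (0:ℝ))) := by
  rw [interior_Ici]
  intro u hu
  exact (((hderiv u (mem_Ici.2 (mem_Ioi.1 hu).le)).hasDerivAt (Ici_mem_nhds (mem_Ioi.1 hu))).differentiableAt).differentiableWithinAt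

lemma h_deriv_eq : ∀ u ∈ interior (Ici (0:ℝ)), deriv h u = h' u := by
  rw [interior_Ici]
  intro u hu
  exact ((hderiv u (mem_Ici.2 (mem_Ioi.1 hu).le)).hasDerivAt (Ici_mem_nhds (mem_Ioi.1 hu))).deriv

lemma h_mono : ∀ a b : ℝ, 0 ≤ a → a ≤ b → h a ≤ h b := by
  intro a b ha hab
  have := (convex_Ici (0:ℝ)).mul_sub_le_image_sub_of_le_deriv (h_cont hderiv hslope)
    (h_diff hderiv hslope) (C := 0)
    (fun u hu => by
      rw [h_deriv_eq hderiv hslope u hu]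
      rw [interior_Ici] at hu
      exact (hslope u (mem_Ici.2 (mem_Ioi.1 hu).le)).1)
    a ha b (by exact le_trans ha hab) hab
  linarith

lemma h_lip : ∀ a b : ℝ, 0 ≤ a → a ≤ b → h b - h a ≤ b - a := by
  intro a b ha hab
  have := (convex_Ici (0:ℝ)).image_sub_le_mul_sub_of_deriv_le (h_cont hderiv hslope)
    (h_diff hderiv hslope) (C := 1)
    (fun u hu => by
      rw [h_deriv_eq hderiv hslope u hu]
      rw [interior_Ici] at hu
      exact (hslope u (mem_Ici.2 (mem_Ioi.1 hu).le)).2)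
    a ha b (by exact le_trans ha hab) hab
  linarith

lemma h_key : ∀ u c : ℝ, 0 ≤ u → 0 ≤ c → h u ≤ h c + max (u - c) 0 := by
  intro u c hu hc
  rcases le_total u c with hle | hle
  · have := h_mono hderiv hslope u c hu hle
    have := le_max_right (u - c) 0
    linarith
  · have := h_lip hderiv hslope c u hc hle
    have := le_max_left (u - c) 0
    linarith

end Hfacts
open MeasureTheory Set intervalIntegral
open scoped ENNReal

section Primitive
variable {q : ℝ → ℝ} (hq : Monotone q) (hq0 : ∀ t, 0 ≤ q t) (hq1 : ∀ t, q t ≤ 1)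

include hq

lemma q_ii : ∀ a b : ℝ, IntervalIntegrable q volume a b := fun _ _ => hq.intervalIntegrable

lemma X_cont : Continuous (fun t => ∫ s in (1:ℝ)..t, q s) :=
  intervalIntegral.continuous_primitive (q_ii hq) 1

lemma X_sub : ∀ a b : ℝ, (∫ s in (1:ℝ)..b, q s) - ∫ s in (1:ℝ)..a, q s = ∫ s in a..b, q s :=
  fun a b => integral_interval_sub_left (q_ii hq 1 b) (q_ii hq 1 a)

lemma X_diff_le : ∀ a b : ℝ, a ≤ b →
    (∫ s in (1:ℝ)..b, q s) - (∫ s in (1:ℝ)..a, q s) ≤ (b - a) * q b := by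
  intro a b hab
  rw [X_sub hq]
  calc ∫ s in a..b, q s ≤ ∫ _s in a..b, q b :=
        integral_mono_on hab (q_ii hq a b) intervalIntegrable_const (fun t ht => hq ht.2)
    _ = (b - a) * q b := by rw [intervalIntegral.integral_const, smul_eq_mul]

lemma X_diff_ge : ∀ a b : ℝ, a ≤ b →
    (b - a) * q a ≤ (∫ s in (1:ℝ)..b, q s) - (∫ s in (1:ℝ)..a, q s) := by
  intro a b hab
  rw [X_sub hq]
  calc (b - a) * q a = ∫ _s in a..b, q a := by rw [intervalIntegral.integral_const, smul_eq_mul]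
    _ ≤ ∫ s in a..b, q s :=
        integral_mono_on hab intervalIntegrable_const (q_ii hq a b) (fun t ht => hq ht.1)

include hq0 hq1

lemma X_nonneg : ∀ t : ℝ, 1 ≤ t → 0 ≤ ∫ s in (1:ℝ)..t, q s := by
  intro t ht
  have := X_diff_ge hq 1 t ht
  have h0 : (q 1) ≥ 0 := hq0 1
  simp only [intervalIntegral.integral_same] at this
  nlinarith

lemma X_le : ∀ t : ℝ, 1 ≤ t → (∫ s in (1:ℝ)..t, q s) ≤ t - 1 := by
  intro t ht
  have := X_diff_le hq 1 t ht
  simp only [intervalIntegral.integral_same] at this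
  nlinarith [hq1 t]

lemma X_le_mul : ∀ t : ℝ, 1 ≤ t → (∫ s in (1:ℝ)..t, q s) ≤ (t - 1) * q t := by
  intro t ht
  have := X_diff_le hq 1 t ht
  simp only [intervalIntegral.integral_same] at this
  linarith

-- right derivative of the primitive
lemma X_hasDerivWithinAt (t : ℝ) :
    HasDerivWithinAt (fun r => ∫ s in (1:ℝ)..r, q s) (sInf (q '' Ioi t)) (Ici t) t := by
  refine intervalIntegral.integral_hasDerivWithinAt_of_tendsto_ae_right (q_ii hq 1 t)
    (s := Ici t) (t := Ioi t) ⟨univ, Filter.univ_mem, ?_⟩ ?_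
  · exact (hq.measurable.aestronglyMeasurable)
  · exact (hq.tendsto_nhdsGT t).mono_left inf_le_left

lemma q_le_sInf (t : ℝ) : q t ≤ sInf (q '' Ioi t) := by
  apply le_csInf (Nonempty.image _ ⟨t + 1, by simp [mem_Ioi]⟩)
  rintro b ⟨w, hw, rfl⟩
  exact hq (le_of_lt hw)

lemma ftc_key (T : ℝ) (hT : 1 ≤ T) :
    ∫ t in (1:ℝ)..T, (t * q t - ∫ s in (1:ℝ)..t, q s) / t ^ 2 ≤ 1 := by
  set X : ℝ → ℝ := fun r => ∫ s in (1:ℝ)..r, q s with hX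
  set f : ℝ → ℝ := fun t => X t / t with hf
  have fcont : ContinuousOn f (Icc 1 T) := by
    apply ContinuousOn.div (X_cont hq).continuousOn continuousOn_id
    intro t ht
    have : (1:ℝ) ≤ t := ht.1
    simp only [id_eq]; linarith
  have hfd : ∀ t ∈ Ioo (1:ℝ) T,
      HasDerivWithinAt f ((sInf (q '' Ioi t) * t - X t * 1) / t ^ 2) (Ioi t) t := by
    intro t ht
    have ht0 : t ≠ 0 := by have := ht.1; intro hc; rw [hc] at this; linarith
    exact (((X_hasDerivWithinAt hq hq0 hq1 t).mono Ioi_subset_Ici_self).div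
      ((hasDerivWithinAt_id t (Ioi t))) ht0)
  have hXmeas : Measurable X := (X_cont hq).measurable
  have hφmeas : Measurable (fun t : ℝ => (t * q t - X t) / t ^ 2) :=
    ((measurable_id.mul hq.measurable).sub hXmeas).div (measurable_id.pow_const 2)
  have hφint : IntegrableOn (fun t : ℝ => (t * q t - X t) / t ^ 2) (Icc 1 T) := by
    apply Integrable.mono' (integrable_const T) (hφmeas.aestronglyMeasurable)
    · filter_upwards [ae_restrict_mem measurableSet_Icc] with t ht
      have ht1 : (1:ℝ) ≤ t := ht.1
      have htT : t ≤ T := ht.2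
      have hD0 : 0 ≤ t * q t - X t := by
        have := X_le_mul hq hq0 hq1 t ht1
        nlinarith [hq0 t]
      have hDle : t * q t - X t ≤ t := by
        have := X_nonneg hq hq0 hq1 t ht1
        nlinarith [hq1 t]
      have ht2 : (1:ℝ) ≤ t ^ 2 := by nlinarith
      rw [Real.norm_eq_abs, abs_of_nonneg (by positivity)]
      calc (t * q t - X t) / t ^ 2 ≤ t * q t - X t := div_le_self hD0 ht2
        _ ≤ T := by linarith
  have hφle : ∀ t ∈ Ioo (1:ℝ) T,
      (t * q t - X t) / t ^ 2 ≤ (sInf (q '' Ioi t) * t - X t * 1) / t ^ 2 := by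
    intro t ht
    have ht0 : (0:ℝ) < t ^ 2 := by nlinarith [ht.1]
    have hnum : t * q t - X t ≤ sInf (q '' Ioi t) * t - X t * 1 := by
      have hs := q_le_sInf hq hq0 hq1 t
      nlinarith [ht.1]
    gcongr
  have key := integral_le_sub_of_hasDeriv_right_of_le hT fcont hfd hφint hφle
  have hf1 : f 1 = 0 := by simp [hf, hX]
  have hfT : f T ≤ 1 := by
    have h1 : X T ≤ T - 1 := X_le hq hq0 hq1 T hT
    have h2 : (0:ℝ) < T := by linarith
    rw [hf, div_le_one h2]
    linarith
  calc ∫ t in (1:ℝ)..T, (t * q t - X t) / t ^ 2 ≤ f T - f 1 := key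
    _ ≤ 1 := by rw [hf1]; linarith
end Primitive
open MeasureTheory Set intervalIntegral Stmt19 Stmt19X
open scoped ENNReal

section LintBound
variable {q : ℝ → ℝ} (hq : Monotone q) (hq0 : ∀ t, 0 ≤ q t) (hq1 : ∀ t, q t ≤ 1)
include hq hq0 hq1

lemma lint_D_le_one :
    ∫⁻ v, dens v * ENNReal.ofReal (v * q v - ∫ s in (1:ℝ)..v, q s) ≤ 1 := by
  set X : ℝ → ℝ := fun r => ∫ s in (1:ℝ)..r, q s with hX
  set g : ℝ → ℝ≥0∞ := fun v => ENNReal.ofReal ((v * q v - X v) / v ^ 2) with hg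
  have hgmeas : Measurable g := by
    apply ENNReal.measurable_ofReal.comp
    exact ((measurable_id.mul hq.measurable).sub (X_cont hq).measurable).div
      (measurable_id.pow_const 2)
  have hptw : (fun v => dens v * ENNReal.ofReal (v * q v - X v)) = (Ici 1).indicator g := by
    funext v
    by_cases hv : (1:ℝ) ≤ v
    · rw [dens_ge v hv, indicator_of_mem (show v ∈ Ici 1 from hv) g, hg]
      have hv2 : (0:ℝ) ≤ 1 / v ^ 2 := by positivity
      rw [← ENNReal.ofReal_mul hv2]
      congr 1
      have hv0 : v ≠ 0 := by intro hc; rw [hc] at hv; norm_num at hv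
      field_simp
    · rw [dens_lt v hv, zero_mul,
        indicator_of_notMem (show v ∉ Ici 1 from hv) g]
  rw [hptw, lintegral_indicator measurableSet_Ici g,
    setLIntegral_congr (Filter.EventuallyEq.symm Ioi_ae_eq_Ici)]
  -- monotone convergence over Ioc 1 (1+n)
  have hind : ∀ v : ℝ, (Ioi 1).indicator g v = ⨆ n : ℕ, (Ioc 1 (1 + (n:ℝ))).indicator g v := by
    intro v
    by_cases hv : v ∈ Ioi (1:ℝ)
    · rw [indicator_of_mem hv g]
      obtain ⟨n, hn⟩ := exists_nat_ge (v - 1)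
      apply le_antisymm
      · refine le_trans ?_ (le_iSup _ n)
        rw [indicator_of_mem (show v ∈ Ioc 1 (1+(n:ℝ)) from ⟨hv, by linarith⟩) g]
      · apply iSup_le
        intro m
        by_cases hm : v ∈ Ioc 1 (1 + (m:ℝ))
        · rw [indicator_of_mem hm g]
        · rw [indicator_of_notMem hm g]; exact zero_le
    · rw [indicator_of_notMem hv g]
      simp only [mem_Ioi, not_lt] at hv
      have : ∀ m : ℕ, (Ioc 1 (1 + (m:ℝ))).indicator g v = 0 := by
        intro m
        apply indicator_of_notMem
        intro hc
        exact absurd hc.1 (not_lt.2 hv)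
      simp [this]
  rw [← lintegral_indicator measurableSet_Ioi g, lintegral_congr hind, lintegral_iSup']
  · apply iSup_le
    intro n
    rw [lintegral_indicator measurableSet_Ioc g]
    have h1n : (1:ℝ) ≤ 1 + (n:ℝ) := by simp
    have hint : IntegrableOn (fun t : ℝ => (t * q t - X t) / t ^ 2) (Ioc 1 (1 + (n:ℝ))) := by
      apply IntegrableOn.mono_set ?_ Ioc_subset_Icc_self
      apply Integrable.mono' (integrable_const (1 + (n:ℝ)))
      · exact (((measurable_id.mul hq.measurable).sub (X_cont hq).measurable).div
          (measurable_id.pow_const 2)).aestronglyMeasurable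
      · filter_upwards [ae_restrict_mem measurableSet_Icc] with t ht
        have ht1 : (1:ℝ) ≤ t := ht.1
        have hD0 : 0 ≤ t * q t - X t := by
          have := X_le_mul hq hq0 hq1 t ht1
          nlinarith [hq0 t]
        have hDle : t * q t - X t ≤ t := by
          have := X_nonneg hq hq0 hq1 t ht1
          nlinarith [hq1 t]
        have ht2 : (1:ℝ) ≤ t ^ 2 := by nlinarith
        rw [Real.norm_eq_abs, abs_of_nonneg (by positivity)]
        calc (t * q t - X t) / t ^ 2 ≤ t * q t - X t := div_le_self hD0 ht2
          _ ≤ 1 + (n:ℝ) := by linarith [ht.2]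
    have hnn : 0 ≤ᶠ[ae (volume.restrict (Ioc 1 (1 + (n:ℝ))))]
        fun t : ℝ => (t * q t - X t) / t ^ 2 := by
      filter_upwards [ae_restrict_mem measurableSet_Ioc] with t ht
      have := X_le_mul hq hq0 hq1 t ht.1.le
      have h0 : 0 ≤ t * q t - X t := by nlinarith [hq0 t, ht.1]
      positivity
    rw [hg]
    rw [← ofReal_integral_eq_lintegral_ofReal hint hnn]
    rw [← intervalIntegral.integral_of_le h1n]
    calc ENNReal.ofReal (∫ t in (1:ℝ)..(1+(n:ℝ)), (t * q t - X t) / t ^ 2)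
        ≤ ENNReal.ofReal 1 := ENNReal.ofReal_le_ofReal (ftc_key hq hq0 hq1 _ h1n)
      _ = 1 := ENNReal.ofReal_one
  · exact fun n => (hgmeas.indicator measurableSet_Ioc).aemeasurable
  · apply ae_of_all
    intro v
    intro m k hmk
    apply indicator_le_indicator_of_subset
    · exact Ioc_subset_Ioc le_rfl (by simp; exact_mod_cast hmk)
    · exact fun _ => zero_le
end LintBound

section Mech
variable {x p : ℝ → ℝ}
    (hx01 : ∀ v, x v ∈ Set.Icc (0:ℝ) 1)
    (hIC : ∀ v ∈ Set.Ici (1:ℝ), ∀ v' ∈ Set.Ici (1:ℝ), v * x v' - p v' ≤ v * x v - p v)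

include hIC in
lemma mech_ic : ∀ v w : ℝ, 1 ≤ v → 1 ≤ w →
    (w * x w - p w) + (v - w) * x w ≤ v * x v - p v := by
  intro v w hv hw
  have := hIC v hv w hw
  nlinarith [this]

include hIC in
lemma mech_xmono : ∀ v w : ℝ, 1 ≤ w → w ≤ v → x w ≤ x v := by
  intro v w hw hwv
  rcases eq_or_lt_of_le hwv with rfl | hlt
  · exact le_rfl
  · have h1 := hIC v (le_trans hw hwv) w hw
    have h2 := hIC w hw v (le_trans hw hwv)
    nlinarith

include hx01 hIC in
lemma mech_umono : ∀ v w : ℝ, 1 ≤ w → w ≤ v →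
    w * x w - p w ≤ v * x v - p v := by
  intro v w hw hwv
  have := mech_ic hIC v w (le_trans hw hwv) hw
  nlinarith [(hx01 w).1]

include hx01 hIC in
lemma mech_ulip : ∀ v w : ℝ, 1 ≤ w → w ≤ v →
    (v * x v - p v) - (w * x w - p w) ≤ v - w := by
  intro v w hw hwv
  have h1 := mech_ic hIC w v hw (le_trans hw hwv)
  nlinarith [(hx01 v).2, (hx01 v).1]

include hx01 hIC in
-- chain lemma: u(v) ≥ ∫_1^v x(max s 1) ds, assuming u ≥ 0 on [1,∞)
lemma mech_chain (hu0 : ∀ v, 1 ≤ v → 0 ≤ v * x v - p v) :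
    ∀ v, 1 ≤ v → (∫ s in (1:ℝ)..v, x (max s 1)) ≤ v * x v - p v := by
  intro v hv
  set q : ℝ → ℝ := fun t => x (max t 1) with hqdef
  have hq : Monotone q := by
    intro a b hab
    exact mech_xmono hIC _ _ (le_max_right a 1) (max_le_max hab le_rfl)
  have hq1eq : ∀ t, 1 ≤ t → q t = x t := by
    intro t ht; rw [hqdef]; simp [max_eq_left ht]
  apply le_of_forall_pos_le_add
  intro ε hε
  obtain ⟨n, hn⟩ := exists_nat_gt ((v - 1) / ε)
  have hn0 : (0:ℝ) < n := lt_of_le_of_lt (div_nonneg (by linarith) hε.le) hn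
  set Δ : ℝ := (v - 1) / n with hΔdef
  have hΔ0 : 0 ≤ Δ := div_nonneg (by linarith) hn0.le
  have hΔε : Δ * 1 ≤ ε := by
    rw [mul_one, hΔdef, div_le_iff₀ hn0]
    nlinarith [(div_lt_iff₀ hε).1 hn]
  set s : ℕ → ℝ := fun i => 1 + i * Δ with hsdef
  have hs1 : ∀ i : ℕ, 1 ≤ s i := by
    intro i; rw [hsdef]; simp only []
    nlinarith [Nat.cast_nonneg (α := ℝ) i, hΔ0]
  have hsucc : ∀ i : ℕ, s (i + 1) = s i + Δ := by
    intro i; rw [hsdef]; push_cast; ring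
  have hsn : s n = v := by
    rw [hsdef, hΔdef]
    field_simp
    ring
  have claim : ∀ k : ℕ, (∫ t in (1:ℝ)..(s k), q t) ≤ (s k * x (s k) - p (s k)) + Δ * (q (s k) - q 1) := by
    intro k
    induction k with
    | zero =>
      have : s 0 = 1 := by rw [hsdef]; simp
      rw [this]
      simp only [intervalIntegral.integral_same, sub_self, mul_zero, add_zero]
      exact hu0 1 le_rfl
    | succ k ih =>
      have hstep : (∫ t in (1:ℝ)..(s (k+1)), q t) - (∫ t in (1:ℝ)..(s k), q t)
          ≤ Δ * q (s (k+1)) := by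
        have := X_diff_le hq (s k) (s (k+1)) (by rw [hsucc]; linarith)
        rw [hsucc k] at this ⊢
        calc (∫ t in (1:ℝ)..(s k + Δ), q t) - (∫ t in (1:ℝ)..(s k), q t)
            ≤ (s k + Δ - s k) * q (s k + Δ) := this
          _ = Δ * q (s k + Δ) := by ring_nf
      have hustep : (s k * x (s k) - p (s k)) + Δ * q (s k) ≤
          s (k+1) * x (s (k+1)) - p (s (k+1)) := by
        have := mech_ic hIC (s (k+1)) (s k) (hs1 (k+1)) (hs1 k)
        rw [hq1eq (s k) (hs1 k)]
        have hd : s (k+1) - s k = Δ := by rw [hsucc]; ring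
        calc (s k * x (s k) - p (s k)) + Δ * x (s k)
            = (s k * x (s k) - p (s k)) + (s (k+1) - s k) * x (s k) := by rw [hd]
          _ ≤ _ := this
      have hmono : q (s k) ≤ q (s (k+1)) := hq (by rw [hsucc]; linarith)
      linarith
  have := claim n
  rw [hsn] at this
  have hq01 : q v - q 1 ≤ 1 := by
    have h1 := (hx01 (max v 1)).2
    have h2 := (hx01 (max 1 1)).1
    simp only [hqdef]
    linarith
  have hqv : q v = x v := hq1eq v hv
  nlinarith [hΔ0, hq (le_refl 1), mul_le_mul_of_nonneg_left hq01 hΔ0]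
end Mech

section Final
variable {h h' : ℝ → ℝ}
    (hderiv : ∀ u ∈ Set.Ici (0 : ℝ), HasDerivWithinAt h (h' u) (Set.Ici 0) u)
    (hslope : ∀ u ∈ Set.Ici (0 : ℝ), h' u ∈ Set.Icc (0 : ℝ) 1)
    (hnonneg : ∀ u ∈ Set.Ici (0 : ℝ), 0 ≤ h u)

noncomputable def Nh (h : ℝ → ℝ) : ℝ≥0∞ := ∫⁻ v, dens v * ENNReal.ofReal (h (v - 1))

include hnonneg in
lemma rhs_val :
    eInt equalRev (fun v => ((h (v - 1) : ℝ) : EReal)) = ((Nh h : ℝ≥0∞) : EReal) := by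
  have hneg : (∫⁻ v, epos (-(((h (v-1):ℝ)) : EReal)) ∂equalRev) = 0 := by
    rw [lint_er]
    have hz : (fun v => dens v * epos (-(((h (v-1):ℝ)) : EReal))) = fun _ => (0:ℝ≥0∞) := by
      funext v
      by_cases hv : 1 ≤ v
      · rw [epos_neg_coe, ENNReal.ofReal_eq_zero.2 (by linarith [hnonneg (v-1) (by simp only [Set.mem_Ici]; linarith)]),
          mul_zero]
      · rw [dens_lt v hv, zero_mul]
    rw [hz, lintegral_zero]
  rw [eInt, if_neg (by rw [hneg]; exact ENNReal.zero_ne_top), hneg]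
  have hpos : (∫⁻ v, epos ((((h (v-1):ℝ)) : EReal)) ∂equalRev) = Nh h := by
    rw [lint_er, Nh]
    exact lintegral_congr fun v => by rw [epos_coe]
  rw [hpos]
  simp

include hnonneg in
lemma attain_val :
    obj h (fun _ => 1) (fun _ => 1) = ((Nh h : ℝ≥0∞) : EReal) + 1 := by
  rw [obj]
  set φ : ℝ → EReal := fun v => ((v * (1:ℝ) : ℝ) : EReal) + gTrade h (v * 1 - 1) with hφ
  have hφge : ∀ v : ℝ, 1 ≤ v → φ v = (((1 + h (v-1) : ℝ)) : EReal) := by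
    intro v hv
    rw [hφ]
    simp only [mul_one]
    rw [gTrade, if_pos (by linarith : (0:ℝ) ≤ v - 1), ← EReal.coe_add]
    congr 1
    ring
  have hφlt : ∀ v : ℝ, ¬ (1 ≤ v) → φ v = ⊥ := by
    intro v hv
    rw [hφ]
    simp only [mul_one]
    rw [gTrade, if_neg (by intro hc; exact hv (by linarith))]
    exact EReal.add_bot _
  have hneg : (∫⁻ v, epos (-(φ v)) ∂equalRev) = 0 := by
    rw [lint_er]
    have hz : (fun v => dens v * epos (-(φ v))) = fun _ => (0:ℝ≥0∞) := by
      funext v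
      by_cases hv : 1 ≤ v
      · rw [hφge v hv, epos_neg_coe,
          ENNReal.ofReal_eq_zero.2 (by linarith [hnonneg (v-1) (by simp only [Set.mem_Ici]; linarith)]), mul_zero]
      · rw [dens_lt v hv, zero_mul]
    rw [hz, lintegral_zero]
  rw [eInt, if_neg (by rw [hneg]; exact ENNReal.zero_ne_top), hneg]
  have hpos : (∫⁻ v, epos (φ v) ∂equalRev) = Nh h + 1 := by
    rw [lint_er]
    have hz : (fun v => dens v * epos (φ v))
        = fun v => dens v * ENNReal.ofReal (h (v-1)) + dens v := by
      funext v
      by_cases hv : 1 ≤ v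
      · rw [hφge v hv, epos_coe,
          ENNReal.ofReal_add (by norm_num) (hnonneg (v-1) (by simp only [Set.mem_Ici]; linarith)), mul_add,
          ENNReal.ofReal_one, mul_one, add_comm]
      · rw [dens_lt v hv, zero_mul, zero_mul, zero_add]
    rw [hz, lintegral_add_right _ meas_dens, mass, Nh]
  rw [hpos]
  simp only [ENNReal.toReal_zero, EReal.coe_zero, sub_zero]
  rw [EReal.coe_ennreal_add, EReal.coe_ennreal_one]

include hderiv hslope hnonneg in
lemma obj_le (x p : ℝ → ℝ) (hfeas : Feas x p) :
    obj h x p ≤ ((Nh h : ℝ≥0∞) : EReal) + 1 := by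
  obtain ⟨hx01, hIC⟩ := hfeas
  rw [obj]
  set φ : ℝ → EReal := fun v => ((v * x v : ℝ) : EReal) + gTrade h (v * x v - p v) with hφ
  by_cases hA : ∃ v0, 1 ≤ v0 ∧ v0 * x v0 - p v0 < 0
  · -- infeasible utility: objective is ⊥
    obtain ⟨v0, hv0, hu0⟩ := hA
    set δ : ℝ := -(v0 * x v0 - p v0) / 2 with hδ
    have hδ0 : 0 < δ := by rw [hδ]; linarith
    have hkey : ∀ v ∈ Icc v0 (v0 + δ), dens v * epos (-(φ v)) = ⊤ := by
      intro v hv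
      have hv1 : 1 ≤ v := le_trans hv0 hv.1
      have huv : v * x v - p v < 0 := by
        have := mech_ulip hx01 hIC v v0 hv0 hv.1
        have := hv.2
        rw [hδ] at *
        linarith
      have : φ v = ⊥ := by
        rw [hφ]
        simp only []
        rw [gTrade, if_neg (by linarith)]
        exact EReal.add_bot _
      rw [this, epos_neg_bot, ENNReal.mul_top (dens_pos v hv1)]
    have htop : (∫⁻ v, epos (-(φ v)) ∂equalRev) = ⊤ := by
      rw [lint_er]
      rw [eq_top_iff]
      calc (⊤:ℝ≥0∞) = ∫⁻ v, (Icc v0 (v0+δ)).indicator (fun _ => (⊤:ℝ≥0∞)) v := by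
            rw [lintegral_indicator measurableSet_Icc, setLIntegral_const, Real.volume_Icc]
            rw [ENNReal.top_mul (by simp [ENNReal.ofReal_eq_zero]; linarith)]
        _ ≤ _ := by
            apply lintegral_mono
            intro v
            by_cases hv : v ∈ Icc v0 (v0 + δ)
            · rw [indicator_of_mem hv]
              exact le_of_eq (hkey v hv).symm
            · rw [indicator_of_notMem hv]
              exact zero_le
    rw [eInt, if_pos htop]
    exact bot_le
  · -- utility nonnegative on [1, ∞)
    push_neg at hA
    have hu0 : ∀ v, 1 ≤ v → 0 ≤ v * x v - p v := fun v hv => hA v hv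
    set q : ℝ → ℝ := fun t => x (max t 1) with hqdef
    have hq : Monotone q := fun a b hab =>
      mech_xmono hIC _ _ (le_max_right a 1) (max_le_max hab le_rfl)
    have hq0 : ∀ t, 0 ≤ q t := fun t => (hx01 _).1
    have hq1 : ∀ t, q t ≤ 1 := fun t => (hx01 _).2
    set X : ℝ → ℝ := fun r => ∫ s in (1:ℝ)..r, q s with hX
    have hDmeas : Measurable (fun v => dens v * ENNReal.ofReal (v * q v - X v)) :=
      meas_dens.mul (ENNReal.measurable_ofReal.comp
        ((measurable_id.mul hq.measurable).sub (X_cont hq).measurable))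
    have hptw : ∀ v, dens v * epos (φ v) ≤
        dens v * ENNReal.ofReal (h (v-1)) + dens v * ENNReal.ofReal (v * q v - X v) := by
      intro v
      by_cases hv : 1 ≤ v
      · have hqv : q v = x v := by rw [hqdef]; simp [max_eq_left hv]
        have huv := hu0 v hv
        have hφv : φ v = (((v * x v + (-(v * x v - p v) + h (v * x v - p v)) : ℝ)) : EReal) := by
          rw [hφ]
          simp only []
          rw [gTrade, if_pos huv, ← EReal.coe_add]
        have hreal : v * x v + (-(v * x v - p v) + h (v * x v - p v))
            ≤ h (v-1) + (v * q v - X v) := by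
          have hk := h_key hderiv hslope (v * x v - p v) (v - 1) huv (by linarith)
          have hchain : X v ≤ v * x v - p v := mech_chain hx01 hIC hu0 v hv
          have hXle : X v ≤ v - 1 := X_le hq hq0 hq1 v hv
          rw [hqv]
          rcases le_total (v * x v - p v - (v - 1)) 0 with hcase | hcase
          · rw [max_eq_right hcase] at hk
            linarith
          · rw [max_eq_left hcase] at hk
            linarith
        rw [hφv, epos_coe]
        calc dens v * ENNReal.ofReal (v * x v + (-(v * x v - p v) + h (v * x v - p v)))
            ≤ dens v * ENNReal.ofReal (h (v-1) + (v * q v - X v)) := by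
              exact mul_le_mul_right (ENNReal.ofReal_le_ofReal hreal) _
          _ ≤ dens v * (ENNReal.ofReal (h (v-1)) + ENNReal.ofReal (v * q v - X v)) := by
              exact mul_le_mul_right (ENNReal.ofReal_add_le) _
          _ = _ := by rw [mul_add]
      · rw [dens_lt v hv, zero_mul, zero_mul, zero_mul, zero_add]
    by_cases hneg : (∫⁻ v, epos (-(φ v)) ∂equalRev) = ⊤
    · rw [eInt, if_pos hneg]; exact bot_le
    · rw [eInt, if_neg hneg]
      have hPle : (∫⁻ v, epos (φ v) ∂equalRev) ≤ Nh h + 1 := by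
        rw [lint_er]
        calc ∫⁻ v, dens v * epos (φ v)
            ≤ ∫⁻ v, (dens v * ENNReal.ofReal (h (v-1)) + dens v * ENNReal.ofReal (v * q v - X v)) :=
              lintegral_mono hptw
          _ = Nh h + ∫⁻ v, dens v * ENNReal.ofReal (v * q v - X v) := by
              rw [lintegral_add_right _ hDmeas, Nh]
          _ ≤ Nh h + 1 := add_le_add_right (lint_D_le_one hq hq0 hq1) _
      calc ((∫⁻ v, epos (φ v) ∂equalRev : ℝ≥0∞) : EReal)
            - (((∫⁻ v, epos (-(φ v)) ∂equalRev).toReal : ℝ) : EReal)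
          ≤ ((∫⁻ v, epos (φ v) ∂equalRev : ℝ≥0∞) : EReal) := by
            rw [sub_eq_add_neg]
            calc _ ≤ ((∫⁻ v, epos (φ v) ∂equalRev : ℝ≥0∞) : EReal) + 0 := by
                  apply add_le_add_right
                  rw [← EReal.coe_neg]
                  exact_mod_cast neg_nonpos.2 ENNReal.toReal_nonneg
              _ = _ := add_zero _
        _ ≤ ((Nh h : ℝ≥0∞) : EReal) + 1 := by
            rw [← EReal.coe_ennreal_one, ← EReal.coe_ennreal_add]
            exact EReal.coe_ennreal_le_coe_ennreal_iff.2 hPle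
end Final


open Stmt19 in
/-- **Example 3.2** (the surplus-utility tradeoff for the equal revenue
distribution is solved by posting the price `1`). -/
theorem stmt_19 (h h' : ℝ → ℝ)
    (hderiv : ∀ u ∈ Set.Ici (0 : ℝ), HasDerivWithinAt h (h' u) (Set.Ici 0) u)
    (hslope : ∀ u ∈ Set.Ici (0 : ℝ), h' u ∈ Set.Icc (0 : ℝ) 1)
    (hnonneg : ∀ u ∈ Set.Ici (0 : ℝ), 0 ≤ h u) :
    sSup {r : EReal | ∃ x p : ℝ → ℝ, Feas x p ∧ r = obj h x p}
        = eInt equalRev (fun v => ((h (v - 1) : ℝ) : EReal)) + 1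
    ∧ obj h (fun _ => 1) (fun _ => 1)
        = eInt equalRev (fun v => ((h (v - 1) : ℝ) : EReal)) + 1 := by
  have hrhs := rhs_val (h := h) hnonneg
  have hatt : obj h (fun _ => 1) (fun _ => 1)
      = eInt equalRev (fun v => ((h (v - 1) : ℝ) : EReal)) + 1 := by
    rw [hrhs, attain_val (h := h) hnonneg]
  refine ⟨le_antisymm ?_ ?_, hatt⟩
  · apply sSup_le
    rintro r ⟨x, p, hfeas, rfl⟩
    rw [hrhs]
    exact obj_le hderiv hslope hnonneg x p hfeas
  · apply le_sSup
    refine ⟨(fun _ => 1), (fun _ => 1), ⟨fun v => ⟨zero_le_one, le_rfl⟩, fun v hv w hw => le_rfl⟩, hatt.symm⟩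
end
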